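/- arXiv:2012.09502 — 5 statements merged into one kernel-verified Lean document; each statement's English description precedes it below -/
import Mathlib

section
/- Let G be a finite weighted directed Eulerian multigraph (for every vertex v, the total weight of incoming edges equals the total weight of outgoing edges). Then for every edge e of G there exists a directed cycle C containing e such that every edge e' of C has weight w(e') ≥ w(e)/m, where m is the number of edges of G. -/
lemma chain'_zip {α : Type*} {r : α → α → Prop} :
    ∀ {l : List α}, l.Chain' r → ∀ p ∈ l.dropLast.zip l.tail, r p.1 p.2
  | [], _, p, hp => by simp at hp
  | [x], _, p, hp => by simp at hp
  | x :: y :: t, h, p, hp => by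
    simp only [List.Chain', List.isChain_cons_cons] at h
    simp only [List.dropLast_cons₂, List.zip_cons_cons, List.tail_cons, List.mem_cons] at hp
    rcases hp with rfl | hp
    · exact h.1
    · exact chain'_zip h.2 p hp

lemma exists_nodup_chain {α : Type*} {r : α → α → Prop} {x y : α}
    (h : Relation.ReflTransGen r x y) :
    ∃ l : List α, l.Chain' r ∧ l.head? = some x ∧ l.getLast? = some y ∧ l.Nodup := by
  classical
  induction h using Relation.ReflTransGen.head_induction_on with
  | refl => exact ⟨[y], by simp [List.Chain', List.isChain_singleton]⟩
  | head hxz _ ih =>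
    rename_i x z _
    obtain ⟨l, hc, hh, hg, hn⟩ := ih
    by_cases hx : x ∈ l
    · obtain ⟨s, t, rfl⟩ := List.append_of_mem hx
      refine ⟨x :: t, hc.suffix ⟨s, rfl⟩, rfl, ?_, (List.nodup_append.mp hn).2.1⟩
      rwa [List.getLast?_append_of_ne_nil (l₁ := s)] at hg
      simp
    · have hz : l.head? = some z := hh
      obtain ⟨l', rfl⟩ : ∃ l', l = z :: l' := by
        cases l with
        | nil => simp at hz
        | cons a l' => exact ⟨l', by simpa using congrArg (Option.getD · z) hz⟩
      exact ⟨x :: z :: l', List.isChain_cons_cons.mpr ⟨hxz, hc⟩, rfl, by simpa using hg,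
        List.nodup_cons.mpr ⟨hx, hn⟩⟩

/-- The directed edges of a cycle given by its list of vertices `l`:
consecutive pairs, wrapping around from the last vertex back to the first. -/
def cycleEdges {V : Type*} (l : List V) : List (V × V) :=
  l.zip (l.rotate 1)

/-- In a finite weighted directed Eulerian (multi)graph, for every edge `(a,b)`
there is a directed cycle through `(a,b)` all of whose edges have weight at
least `w a b / m`, where `m` is the number of edges. -/
theorem stmt0 {V : Type*} [Fintype V] [DecidableEq V]
    (w : V → V → ℝ) (hw : ∀ a b, 0 ≤ w a b)
    (m : ℕ)
    (hm : m = (Finset.univ.filter (fun p : V × V => 0 < w p.1 p.2)).card)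
    (heul : ∀ v, ∑ u, w u v = ∑ u, w v u)
    (a b : V) (hab : 0 < w a b) :
    ∃ l : List V, l ≠ [] ∧ l.Nodup ∧ (a, b) ∈ cycleEdges l ∧
      ∀ p ∈ cycleEdges l, w a b / m ≤ w p.1 p.2 := by
  classical
  set W := w a b with hW
  have hm1 : 1 ≤ m := by
    rw [hm]
    refine Finset.card_pos.mpr ⟨(a, b), ?_⟩
    simp [hab]; exact hab
  have hm0 : (0 : ℝ) < m := by exact_mod_cast hm1
  have hWW : W / m ≤ W := div_le_self hab.le (by exact_mod_cast hm1)
  have hWm : 0 < W / m := div_pos hab hm0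
  rcases eq_or_ne a b with rfl | hne
  · exact ⟨[a], by simp, by simp, by simp [cycleEdges], by simp [cycleEdges, hWW]; exact hWW⟩
  set r : V → V → Prop := fun u v => W / m ≤ w u v with hr
  set S : Finset V := Finset.univ.filter (fun v => Relation.ReflTransGen r b v) with hS
  have hbS : b ∈ S := by
    simp only [hS, Finset.mem_filter, Finset.mem_univ, true_and]
    exact Relation.ReflTransGen.refl
  have hclosed : ∀ u ∈ S, ∀ v, r u v → v ∈ S := by
    intro u hu v huv
    simp only [hS, Finset.mem_filter, Finset.mem_univ, true_and] at hu ⊢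
    exact hu.tail huv
  have haS : a ∈ S := by
    by_contra haS
    have key : ∑ v ∈ S, ∑ u ∈ Sᶜ, w u v = ∑ v ∈ S, ∑ u ∈ Sᶜ, w v u := by
      have h1 : ∑ v ∈ S, ∑ u, w u v = ∑ v ∈ S, ∑ u, w v u :=
        Finset.sum_congr rfl fun v _ => heul v
      have h2 : ∀ v, ∑ u, w u v = ∑ u ∈ S, w u v + ∑ u ∈ Sᶜ, w u v := fun v =>
        (Finset.sum_add_sum_compl S _).symm
      have h3 : ∀ v, ∑ u, w v u = ∑ u ∈ S, w v u + ∑ u ∈ Sᶜ, w v u := fun v =>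
        (Finset.sum_add_sum_compl S _).symm
      simp only [h2, h3, Finset.sum_add_distrib] at h1
      rw [Finset.sum_comm (s := S) (t := S) (f := fun x u => w u x)] at h1
      exact add_left_cancel h1
    have hlow : W ≤ ∑ v ∈ S, ∑ u ∈ Sᶜ, w u v := by
      calc W = w a b := rfl
        _ ≤ ∑ u ∈ Sᶜ, w u b :=
          Finset.single_le_sum (fun u _ => hw u b) (Finset.mem_compl.mpr haS)
        _ ≤ ∑ v ∈ S, ∑ u ∈ Sᶜ, w u v :=
          Finset.single_le_sum (fun v _ => Finset.sum_nonneg fun u _ => hw u v) hbS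
    have hhigh : ∑ v ∈ S, ∑ u ∈ Sᶜ, w v u < W := by
      rw [← Finset.sum_product']
      set T := (S ×ˢ Sᶜ).filter (fun p : V × V => 0 < w p.1 p.2) with hT
      have hsub : ∑ p ∈ S ×ˢ Sᶜ, w p.1 p.2 = ∑ p ∈ T, w p.1 p.2 := by
        rw [hT, Finset.sum_filter_of_ne]
        intro p _ hp
        exact lt_of_le_of_ne (hw _ _) (Ne.symm hp)
      rw [hsub]
      have hTcard : T.card ≤ m := by
        rw [hm]
        exact Finset.card_le_card fun p hp => by
          simp only [hT, Finset.mem_filter] at hp ⊢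
          exact ⟨Finset.mem_univ _, hp.2⟩
      have hsmall : ∀ p ∈ T, w p.1 p.2 < W / m := by
        intro p hp
        simp only [hT, Finset.mem_filter, Finset.mem_product, Finset.mem_compl] at hp
        by_contra hc
        exact hp.1.2 (hclosed p.1 hp.1.1 p.2 (not_lt.mp hc))
      rcases T.eq_empty_or_nonempty with hTe | hTne
      · rw [hTe]; simpa using hab
      · calc ∑ p ∈ T, w p.1 p.2 < ∑ p ∈ T, W / m :=
              Finset.sum_lt_sum_of_nonempty hTne hsmall
          _ = T.card * (W / m) := by rw [Finset.sum_const, nsmul_eq_mul]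
          _ ≤ m * (W / m) := by
              apply mul_le_mul_of_nonneg_right _ hWm.le
              exact_mod_cast hTcard
          _ = W := by field_simp
    exact absurd (key ▸ hlow) (not_le.mpr hhigh)
  have hreach : Relation.ReflTransGen r b a := by
    simpa [hS] using haS
  obtain ⟨l, hc, hh, hg, hn⟩ := exists_nodup_chain hreach
  obtain ⟨t, rfl⟩ : ∃ t, l = b :: t := by
    cases l with
    | nil => simp at hh
    | cons x t => exact ⟨t, by simpa using congrArg (Option.getD · b) hh⟩
  have hlne : b :: t ≠ [] := by simp
  have hlast : (b :: t).getLast hlne = a := by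
    rw [List.getLast?_eq_getLast hlne] at hg; exact Option.some_injective _ hg
  have hdecomp : (b :: t).dropLast ++ [a] = b :: t := by
    rw [← hlast]; exact List.dropLast_append_getLast hlne
  have hnd : (b :: t).dropLast.Nodup ∧ a ∉ (b :: t).dropLast := by
    rw [← hdecomp, List.nodup_append] at hn
    exact ⟨hn.1, fun h => hn.2.2 a h a (by simp) rfl⟩
  have hrot : (a :: (b :: t).dropLast).rotate 1 = b :: t := by
    rw [List.rotate_cons_succ, List.rotate_zero, hdecomp]
  have hce : cycleEdges (a :: (b :: t).dropLast) = (a, b) :: (b :: t).dropLast.zip t := by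
    rw [cycleEdges, hrot, List.zip_cons_cons]
  refine ⟨a :: (b :: t).dropLast, by simp, List.nodup_cons.mpr ⟨hnd.2, hnd.1⟩, ?_, ?_⟩
  · rw [hce]; exact List.mem_cons_self
  · rw [hce]
    intro p hp
    rcases List.mem_cons.mp hp with rfl | hp
    · exact hWW
    · exact chain'_zip hc p hp
end

section
/- In a finite irreducible Markov chain, for any states v, s, t, u, the expected number of visits to v before first hitting t, starting from s, satisfies the triangle inequality: H_v(s,t) ≤ H_v(s,u) + H_v(u,t). -/
set_option linter.unusedSectionVars false
open Matrix Finset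

namespace VisitsAux

variable {V : Type*} [Fintype V] [DecidableEq V]

lemma pow_entry_nonneg {A : Matrix V V ℝ} (hA : ∀ a b, 0 ≤ A a b) :
    ∀ (n : ℕ) (a b : V), 0 ≤ (A ^ n) a b := by
  intro n
  induction n with
  | zero => intro a b; simp [Matrix.one_apply]; split <;> norm_num
  | succ n ih =>
    intro a b
    rw [pow_succ, Matrix.mul_apply]
    exact Finset.sum_nonneg fun c _ => mul_nonneg (ih a c) (hA c b)

lemma pow_entry_le {A B : Matrix V V ℝ} (hA : ∀ a b, 0 ≤ A a b)
    (hAB : ∀ a b, A a b ≤ B a b) :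
    ∀ (n : ℕ) (a b : V), (A ^ n) a b ≤ (B ^ n) a b := by
  intro n
  induction n with
  | zero => intro a b; simp
  | succ n ih =>
    intro a b
    rw [pow_succ, pow_succ, Matrix.mul_apply, Matrix.mul_apply]
    refine Finset.sum_le_sum fun c _ => ?_
    exact mul_le_mul (ih a c) (hAB c b) (hA c b) (pow_entry_nonneg (fun x y => (hA x y).trans (hAB x y)) n a c)

lemma rowsum_pow_le_one {A : Matrix V V ℝ} (h0 : ∀ a b, 0 ≤ A a b)
    (h1 : ∀ a, ∑ b, A a b ≤ 1) : ∀ (n : ℕ) (a : V), ∑ b, (A ^ n) a b ≤ 1 := by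
  intro n
  induction n with
  | zero => intro a; simp [Matrix.one_apply]
  | succ n ih =>
    intro a
    rw [pow_succ']
    calc ∑ b, (A * A ^ n) a b = ∑ c, A a c * ∑ b, (A ^ n) c b := by
          simp only [Matrix.mul_apply, Finset.mul_sum]
          exact Finset.sum_comm
      _ ≤ ∑ c, A a c * 1 := Finset.sum_le_sum fun c _ => mul_le_mul_of_nonneg_left (ih c) (h0 a c)
      _ ≤ 1 := by simpa using h1 a

lemma rowsum_pow_mono {A : Matrix V V ℝ} (h0 : ∀ a b, 0 ≤ A a b)
    (h1 : ∀ a, ∑ b, A a b ≤ 1) (n m : ℕ) (a : V) :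
    ∑ b, (A ^ (n + m)) a b ≤ ∑ b, (A ^ n) a b := by
  rw [pow_add]
  calc ∑ b, (A ^ n * A ^ m) a b = ∑ c, (A ^ n) a c * ∑ b, (A ^ m) c b := by
        simp only [Matrix.mul_apply, Finset.mul_sum]
        exact Finset.sum_comm
    _ ≤ ∑ c, (A ^ n) a c * 1 := Finset.sum_le_sum fun c _ =>
        mul_le_mul_of_nonneg_left (rowsum_pow_le_one h0 h1 m c) (pow_entry_nonneg h0 n a c)
    _ = ∑ c, (A ^ n) a c := by simp


lemma rowsum_pow_stoch {P : Matrix V V ℝ} (hP1 : ∀ a, ∑ b, P a b = 1) :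
    ∀ (n : ℕ) (a : V), ∑ b, (P ^ n) a b = 1 := by
  intro n
  induction n with
  | zero => intro a; simp [Matrix.one_apply]
  | succ n ih =>
    intro a
    rw [pow_succ']
    calc ∑ b, (P * P ^ n) a b = ∑ c, P a c * ∑ b, (P ^ n) c b := by
          simp only [Matrix.mul_apply, Finset.mul_sum]; exact Finset.sum_comm
      _ = 1 := by simp only [ih, mul_one]; exact hP1 a

lemma exists_pos_pow_ge_one {P : Matrix V V ℝ} (hP0 : ∀ a b, 0 ≤ P a b)
    (hP1 : ∀ a, ∑ b, P a b = 1)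
    (hirr : ∀ a b : V, ∃ n : ℕ, 0 < (P ^ n) a b) (a t : V) :
    ∃ n : ℕ, 1 ≤ n ∧ 0 < (P ^ n) a t := by
  obtain ⟨n, hn⟩ := hirr a t
  match n, hn with
  | (n+1), hn => exact ⟨n+1, Nat.succ_le_succ (Nat.zero_le n), hn⟩
  | 0, hn =>
    have hat : a = t := by
      by_contra h
      simp [Matrix.one_apply, h] at hn
    subst hat
    -- find b with P a b > 0
    have hb : ∃ b, 0 < P a b := by
      by_contra h
      push_neg at h
      have : ∑ b, P a b ≤ 0 := Finset.sum_nonpos fun b _ => h b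
      rw [hP1 a] at this; linarith
    obtain ⟨b, hb⟩ := hb
    obtain ⟨k, hk⟩ := hirr b a
    refine ⟨1 + k, by omega, ?_⟩
    rw [pow_add, pow_one, Matrix.mul_apply]
    have hle : P a b * (P ^ k) b a ≤ ∑ c, P a c * (P ^ k) c a :=
      Finset.single_le_sum (f := fun c => P a c * (P ^ k) c a)
        (fun c _ => mul_nonneg (hP0 a c) (pow_entry_nonneg hP0 k c a)) (Finset.mem_univ b)
    exact lt_of_lt_of_le (mul_pos hb hk) hle


lemma kill_entry_nonneg {P : Matrix V V ℝ} (hP0 : ∀ a b, 0 ≤ P a b) (t a b : V) :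
    0 ≤ (Matrix.of fun a b : V => if b = t then 0 else P a b) a b := by
  simp only [Matrix.of_apply]
  split
  · exact le_rfl
  · exact hP0 a b

lemma kill_rowsum_le {P : Matrix V V ℝ} (hP0 : ∀ a b, 0 ≤ P a b)
    (hP1 : ∀ a, ∑ b, P a b = 1) (t a : V) :
    ∑ b, (Matrix.of fun a b : V => if b = t then 0 else P a b) a b ≤ 1 := by
  rw [← hP1 a]
  refine Finset.sum_le_sum fun b _ => ?_
  simp only [Matrix.of_apply]
  split
  · exact hP0 a b
  · exact le_rfl

lemma summable_kill {P : Matrix V V ℝ} (hP0 : ∀ a b, 0 ≤ P a b)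
    (hP1 : ∀ a, ∑ b, P a b = 1)
    (hirr : ∀ a b : V, ∃ n : ℕ, 0 < (P ^ n) a b) (t s v : V) :
    Summable fun n : ℕ =>
      ((Matrix.of fun a b : V => if b = t then 0 else P a b) ^ n) s v := by
  haveI : Nonempty V := ⟨s⟩
  set K : Matrix V V ℝ := Matrix.of fun a b : V => if b = t then 0 else P a b with hK
  have hK0 : ∀ a b, 0 ≤ K a b := kill_entry_nonneg hP0 t
  have hK1 : ∀ a, ∑ b, K a b ≤ 1 := kill_rowsum_le hP0 hP1 t
  have hKP : ∀ a b, K a b ≤ P a b := by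
    intro a b; simp only [hK, Matrix.of_apply]; split
    · exact hP0 a b
    · exact le_rfl
  -- K^n a t = 0 for n ≥ 1
  have hKt : ∀ (n : ℕ) (a : V), 1 ≤ n → (K ^ n) a t = 0 := by
    intro n a hn
    obtain ⟨m, rfl⟩ := Nat.exists_eq_add_of_le hn
    rw [add_comm, pow_add, pow_one, Matrix.mul_apply]
    refine Finset.sum_eq_zero fun c _ => ?_
    simp [hK]
  -- row sums after n_a steps bounded away from 1
  choose f hf1 hf2 using fun a => exists_pos_pow_ge_one hP0 hP1 hirr a t
  set N : ℕ := Finset.univ.sup f with hN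
  have hN1 : 1 ≤ N := le_trans (hf1 s) (Finset.le_sup (Finset.mem_univ s))
  set ε : ℝ := Finset.univ.inf' Finset.univ_nonempty (fun a => (P ^ f a) a t) with hε
  have hε0 : 0 < ε := by
    rw [hε, Finset.lt_inf'_iff]
    exact fun a _ => hf2 a
  set θ : ℝ := max (1 - ε) (1/2) with hθ
  have hθ0 : 0 < θ := lt_of_lt_of_le (by norm_num) (le_max_right _ _)
  have hθ1 : θ < 1 := by
    rw [hθ]
    apply max_lt _ (by norm_num)
    linarith
  have hrowN : ∀ a, ∑ b, (K ^ N) a b ≤ θ := by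
    intro a
    have h1 : ∑ b, (K ^ N) a b ≤ ∑ b, (K ^ f a) a b := by
      have : N = f a + (N - f a) := by
        have := Finset.le_sup (f := f) (Finset.mem_univ a)
        omega
      rw [this]
      exact rowsum_pow_mono hK0 hK1 _ _ a
    have h2 : ∑ b, (K ^ f a) a b ≤ 1 - (P ^ f a) a t := by
      have e1 : ∑ b, (K ^ f a) a b ≤ ∑ b, (if b = t then 0 else (P ^ f a) a b) := by
        refine Finset.sum_le_sum fun b _ => ?_
        split
        · subst ‹b = t›; exact le_of_eq (hKt _ a (hf1 a))
        · exact pow_entry_le hK0 hKP _ a b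
      have e2 : ∑ b, (if b = t then (0:ℝ) else (P ^ f a) a b)
          = (∑ b, (P ^ f a) a b) - (P ^ f a) a t := by
        have : ∀ b : V, (if b = t then (0:ℝ) else (P ^ f a) a b)
            = (P ^ f a) a b - (if b = t then (P ^ f a) a b else 0) := by
          intro b; split <;> ring
        simp only [this, Finset.sum_sub_distrib, Finset.sum_ite_eq' Finset.univ t,
          Finset.mem_univ, if_pos]
      rw [rowsum_pow_stoch hP1] at e2
      linarith [e1, e2.le]
    have h3 : 1 - (P ^ f a) a t ≤ θ := by
      have : ε ≤ (P ^ f a) a t := Finset.inf'_le _ (Finset.mem_univ a)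
      have : 1 - (P ^ f a) a t ≤ 1 - ε := by linarith
      exact this.trans (le_max_left _ _)
    exact (h1.trans h2).trans h3
  -- geometric decay of row sums
  have hgeom : ∀ (q : ℕ) (a : V), ∑ b, (K ^ (N * q)) a b ≤ θ ^ q := by
    intro q
    induction q with
    | zero => intro a; simp [Matrix.one_apply]
    | succ q ih =>
      intro a
      have hNq : N * (q+1) = N + N * q := by ring
      rw [hNq, pow_add]
      calc ∑ b, (K ^ N * K ^ (N*q)) a b = ∑ c, (K ^ N) a c * ∑ b, (K ^ (N*q)) c b := by
            simp only [Matrix.mul_apply, Finset.mul_sum]; exact Finset.sum_comm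
        _ ≤ ∑ c, (K ^ N) a c * θ ^ q := Finset.sum_le_sum fun c _ =>
            mul_le_mul_of_nonneg_left (ih c) (pow_entry_nonneg hK0 _ a c)
        _ = (∑ c, (K ^ N) a c) * θ ^ q := by rw [← Finset.sum_mul]
        _ ≤ θ * θ ^ q := mul_le_mul_of_nonneg_right (hrowN a) (pow_nonneg hθ0.le q)
        _ = θ ^ (q+1) := (pow_succ' θ q).symm
  have hbound : ∀ n : ℕ, (K ^ n) s v ≤ θ ^ (n / N) := by
    intro n
    have h1 : (K ^ n) s v ≤ ∑ b, (K ^ n) s b :=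
      Finset.single_le_sum (fun b _ => pow_entry_nonneg hK0 n s b) (Finset.mem_univ v)
    have h2 : ∑ b, (K ^ n) s b ≤ ∑ b, (K ^ (N * (n / N))) s b := by
      have hdm : n = N * (n / N) + n % N := (Nat.div_add_mod n N).symm
      calc ∑ b, (K ^ n) s b = ∑ b, (K ^ (N * (n / N) + n % N)) s b := by rw [← hdm]
        _ ≤ _ := rowsum_pow_mono hK0 hK1 _ _ s
    exact (h1.trans h2).trans (hgeom _ s)
  set r : ℝ := θ ^ ((N:ℝ)⁻¹) with hr
  have hr0 : 0 ≤ r := Real.rpow_nonneg hθ0.le _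
  have hr1 : r < 1 := Real.rpow_lt_one hθ0.le hθ1 (by positivity)
  have hND : (0:ℝ) < (N:ℝ) := by exact_mod_cast Nat.lt_of_lt_of_le Nat.zero_lt_one hN1
  have hcomp : ∀ n : ℕ, θ ^ (n / N) ≤ θ⁻¹ * r ^ n := by
    intro n
    have hmod : (n % N : ℕ) < N := Nat.mod_lt n (by omega)
    have h1 : ((N:ℝ)) * ((n / N : ℕ):ℝ) + ((n % N : ℕ):ℝ) = (n:ℝ) := by
      exact_mod_cast Nat.div_add_mod n N
    have h2 : ((n % N : ℕ):ℝ) < (N:ℝ) := by exact_mod_cast hmod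
    have hexp : (N:ℝ)⁻¹ * n - 1 ≤ ((n / N : ℕ) : ℝ) := by
      have h3 : (n:ℝ) ≤ (N:ℝ) * (((n/N:ℕ):ℝ) + 1) := by nlinarith
      have h4 : (N:ℝ)⁻¹ * n ≤ ((n/N:ℕ):ℝ) + 1 := by
        rw [inv_mul_le_iff₀ hND]; exact h3
      linarith
    calc θ ^ (n / N) = θ ^ (((n / N : ℕ):ℝ)) := (Real.rpow_natCast θ _).symm
      _ ≤ θ ^ ((N:ℝ)⁻¹ * n - 1) :=
          Real.rpow_le_rpow_of_exponent_ge hθ0 hθ1.le hexp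
      _ = θ⁻¹ * r ^ n := by
          rw [Real.rpow_sub hθ0, Real.rpow_one, hr,
            ← Real.rpow_natCast (θ ^ ((N:ℝ)⁻¹)) n, ← Real.rpow_mul hθ0.le]
          ring
  refine Summable.of_nonneg_of_le (fun n => pow_entry_nonneg hK0 n s v)
    (fun n => (hbound n).trans (hcomp n)) ?_
  exact (summable_geometric_of_lt_one hr0 hr1).mul_left θ⁻¹

lemma telescope (K S : Matrix V V ℝ) (n : ℕ) :
    K ^ n = S ^ n + ∑ k ∈ Finset.range n, S ^ k * (K - S) * K ^ (n - 1 - k) := by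
  induction n with
  | zero => simp
  | succ n ih =>
    have h1 : K ^ (n+1) = S * K ^ n + (K - S) * K ^ n := by
      rw [pow_succ', sub_mul]
      abel
    have hsum : ∑ k ∈ Finset.range (n+1), S ^ k * (K - S) * K ^ (n + 1 - 1 - k)
        = (K - S) * K ^ n + ∑ i ∈ Finset.range n, S * (S ^ i * (K - S) * K ^ (n - 1 - i)) := by
      rw [Finset.sum_range_succ' (fun k => S ^ k * (K - S) * K ^ (n + 1 - 1 - k)) n]
      simp only [pow_zero, one_mul, Nat.add_sub_cancel, Nat.sub_zero]
      rw [add_comm]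
      congr 1
      refine Finset.sum_congr rfl fun k hk => ?_
      have he : n - (k+1) = n - 1 - k := by omega
      rw [he, pow_succ']; noncomm_ring
    have h2 : S * K ^ n
        = S ^ (n+1) + ∑ i ∈ Finset.range n, S * (S ^ i * (K - S) * K ^ (n - 1 - i)) := by
      conv_lhs => rw [ih]
      rw [mul_add, Finset.mul_sum, ← pow_succ']
    rw [h1, h2, hsum]
    abel

lemma sum_kill_row (A : Matrix V V ℝ) (u s : V) :
    ∑ c, (Matrix.of fun a b : V => if b = u then 0 else A a b) s c
      = (∑ c, A s c) - A s u := by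
  have h : ∀ c : V, (if c = u then (0:ℝ) else A s c)
      = A s c - (if c = u then A s c else 0) := by intro c; split <;> ring
  simp only [Matrix.of_apply, h, Finset.sum_sub_distrib,
    Finset.sum_ite_eq' Finset.univ u, Finset.mem_univ, if_pos]

lemma F_le_one {A : Matrix V V ℝ} (h0 : ∀ a b, 0 ≤ A a b)
    (h1 : ∀ a, ∑ b, A a b ≤ 1) (u : V) :
    ∀ (n : ℕ) (s : V), ∑ k ∈ Finset.range n,
      (∑ a, ((Matrix.of fun a b : V => if b = u then 0 else A a b) ^ k) s a * A a u)
        ≤ 1 := by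
  set S : Matrix V V ℝ := Matrix.of fun a b : V => if b = u then 0 else A a b with hS
  have hS0 : ∀ a b, 0 ≤ S a b := by
    intro a b; simp only [hS, Matrix.of_apply]; split
    · exact le_rfl
    · exact h0 a b
  intro n
  induction n with
  | zero => intro s; simp
  | succ n ih =>
    intro s
    rw [Finset.sum_range_succ' (fun k => ∑ a, (S ^ k) s a * A a u) n]
    have hg0 : ∑ a, (S ^ 0) s a * A a u = A s u := by
      simp [Matrix.one_apply]
    have hstep : ∀ k : ℕ, ∑ a, (S ^ (k+1)) s a * A a u
        = ∑ c, S s c * (∑ a, (S ^ k) c a * A a u) := by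
      intro k
      rw [pow_succ']
      simp only [Matrix.mul_apply, Finset.sum_mul, Finset.mul_sum, mul_assoc]
      exact Finset.sum_comm
    rw [hg0]
    have h2 : ∑ k ∈ Finset.range n, (∑ a, (S ^ (k+1)) s a * A a u)
        = ∑ c, S s c * ∑ k ∈ Finset.range n, (∑ a, (S ^ k) c a * A a u) := by
      simp only [hstep, Finset.mul_sum]
      exact Finset.sum_comm
    rw [h2]
    have h3 : ∑ c, S s c * ∑ k ∈ Finset.range n, (∑ a, (S ^ k) c a * A a u)
        ≤ ∑ c, S s c := by
      refine Finset.sum_le_sum fun c _ => ?_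
      simpa using mul_le_mul_of_nonneg_left (ih c) (hS0 s c)
    have h4 : ∑ c, S s c ≤ 1 - A s u := by
      rw [hS, sum_kill_row]
      have := h1 s
      linarith
    linarith

end VisitsAux

open VisitsAux

/-- `visitsBefore P v s t` is the expected number of visits to `v` (counting
time `0`) of the Markov chain with transition matrix `P` started at `s`,
strictly before the first time `n ≥ 1` at which the chain is at `t`.
It equals `∑_{n ≥ 0} (R^n) s v` where `R` is `P` with the column of `t`
zeroed out (the chain killed upon entering `t`). -/
noncomputable def visitsBefore {V : Type*} [Fintype V] [DecidableEq V]
    (P : Matrix V V ℝ) (v s t : V) : ℝ :=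
  ∑' n : ℕ, ((Matrix.of fun a b : V => if b = t then 0 else P a b) ^ n) s v

/-- Triangle inequality for expected visit counts in a finite irreducible
Markov chain: `H_v(s,t) ≤ H_v(s,u) + H_v(u,t)`. -/
theorem stmt4 {V : Type*} [Fintype V] [DecidableEq V]
    (P : Matrix V V ℝ) (hP0 : ∀ a b, 0 ≤ P a b) (hP1 : ∀ a, ∑ b, P a b = 1)
    (hirr : ∀ a b : V, ∃ n : ℕ, 0 < (P ^ n) a b)
    (v s t u : V) :
    visitsBefore P v s t ≤ visitsBefore P v s u + visitsBefore P v u t := by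
  classical
  simp only [visitsBefore]
  set K : Matrix V V ℝ := Matrix.of fun a b : V => if b = t then 0 else P a b with hKdef
  set Q : Matrix V V ℝ := Matrix.of fun a b : V => if b = u then 0 else P a b with hQdef
  set S : Matrix V V ℝ := Matrix.of fun a b : V => if b = u then 0 else K a b with hSdef
  have hK0 : ∀ a b, 0 ≤ K a b := kill_entry_nonneg hP0 t
  have hQ0 : ∀ a b, 0 ≤ Q a b := kill_entry_nonneg hP0 u
  have hK1 : ∀ a, ∑ b, K a b ≤ 1 := kill_rowsum_le hP0 hP1 t
  have hS0 : ∀ a b, 0 ≤ S a b := by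
    intro a b; simp only [hSdef, Matrix.of_apply]; split
    · exact le_rfl
    · exact hK0 a b
  have hSK : ∀ a b, S a b ≤ K a b := by
    intro a b; simp only [hSdef, Matrix.of_apply]; split
    · exact hK0 a b
    · exact le_rfl
  have hSQ : ∀ a b, S a b ≤ Q a b := by
    intro a b
    simp only [hSdef, hQdef, hKdef, Matrix.of_apply]
    split
    · exact le_rfl
    · split
      · exact hP0 a b
      · exact le_rfl
  have hKsum : ∀ x y : V, Summable fun n : ℕ => (K ^ n) x y := fun x y =>
    summable_kill hP0 hP1 hirr t x y
  have hQsum : Summable fun n : ℕ => (Q ^ n) s v := summable_kill hP0 hP1 hirr u s v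
  have hSsum : Summable fun n : ℕ => (S ^ n) s v :=
    Summable.of_nonneg_of_le (fun n => pow_entry_nonneg hS0 n s v)
      (fun n => pow_entry_le hS0 hSK n s v) (hKsum s v)
  set g : ℕ → ℝ := fun k => ∑ a, (S ^ k) s a * K a u with hgdef
  set h : ℕ → ℝ := fun m => (K ^ m) u v with hhdef
  have hg0 : ∀ k, 0 ≤ g k := fun k =>
    Finset.sum_nonneg fun a _ => mul_nonneg (pow_entry_nonneg hS0 k s a) (hK0 a u)
  have hh0 : ∀ m, 0 ≤ h m := fun m => pow_entry_nonneg hK0 m u v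
  have hgle : ∀ n : ℕ, ∑ k ∈ Finset.range n, g k ≤ 1 := fun n => F_le_one hK0 hK1 u n s
  have hgsum : Summable g := summable_of_sum_range_le hg0 hgle
  have hhsum : Summable h := hKsum u v
  have hF1 : ∑' k, g k ≤ 1 := Real.tsum_le_of_sum_range_le hg0 hgle
  have hDentry : ∀ a b, (K - S) a b = if b = u then K a u else 0 := by
    intro a b
    rw [Matrix.sub_apply]
    simp only [hSdef, Matrix.of_apply]
    split
    · rename_i hb; subst hb; rw [sub_zero]
    · rw [sub_self]
  have hentry : ∀ n : ℕ,
      (K ^ n) s v = (S ^ n) s v + ∑ k ∈ Finset.range n, g k * h (n - 1 - k) := by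
    intro n
    have htel := congrFun (congrFun (telescope K S n) s) v
    rw [Matrix.add_apply] at htel
    rw [htel, Matrix.sum_apply]
    congr 1
    refine Finset.sum_congr rfl fun k hk => ?_
    rw [Matrix.mul_apply]
    have hrow : ∀ b, (S ^ k * (K - S)) s b = if b = u then g k else 0 := by
      intro b
      rw [Matrix.mul_apply]
      simp only [hDentry]
      split
      · rename_i hb; subst hb
        simp [hgdef]
      · simp
    simp only [hrow, ite_mul, zero_mul]
    rw [Finset.sum_ite_eq' Finset.univ u]
    simp [hhdef]
  set c : ℕ → ℝ := fun n => ∑ k ∈ Finset.range n, g k * h (n - 1 - k) with hcdef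
  have hcsum : Summable c := by
    have hs : Summable fun n => (K ^ n) s v - (S ^ n) s v := (hKsum s v).sub hSsum
    refine hs.congr fun n => ?_
    rw [hentry n]; ring
  have hmain : (∑' n, (K ^ n) s v) = (∑' n, (S ^ n) s v) + ∑' n, c n := by
    rw [← Summable.tsum_add hSsum hcsum]
    exact tsum_congr fun n => hentry n
  have hC : ∑' n, c n = (∑' k, g k) * ∑' m, h m := by
    rw [Summable.tsum_eq_zero_add hcsum]
    have hc0 : c 0 = 0 := by simp [hcdef]
    rw [hc0, zero_add]
    have hshift : ∀ n : ℕ, c (n + 1) = ∑ k ∈ Finset.range (n + 1), g k * h (n - k) := by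
      intro n
      simp only [hcdef]
      refine Finset.sum_congr rfl fun k hk => ?_
      congr 2
    rw [tsum_congr hshift]
    refine (tsum_mul_tsum_eq_tsum_sum_range_of_summable_norm ?_ ?_).symm
    · exact hgsum.congr fun k => (Real.norm_of_nonneg (hg0 k)).symm
    · exact hhsum.congr fun m => (Real.norm_of_nonneg (hh0 m)).symm
  have hG : (∑' n, (S ^ n) s v) ≤ ∑' n, (Q ^ n) s v :=
    Summable.tsum_le_tsum (fun n => pow_entry_le hS0 hSQ n s v) hSsum hQsum
  have hH0 : 0 ≤ ∑' m, h m := tsum_nonneg hh0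
  have hFH : (∑' k, g k) * (∑' m, h m) ≤ ∑' m, h m := mul_le_of_le_one_left hH0 hF1
  calc (∑' n, (K ^ n) s v) = (∑' n, (S ^ n) s v) + ∑' n, c n := hmain
    _ ≤ (∑' n, (Q ^ n) s v) + (∑' m, h m) := by
        rw [hC]; exact add_le_add hG hFH
    _ = (∑' n, (Q ^ n) s v) + ∑' n, (K ^ n) u v := rfl
end

section
/- Let G be a finite strongly connected weighted directed Eulerian graph and let s, t, v be vertices with an edge e = (s,t) of weight w(s,t) > 0. Then the expected number of visits to v by a random walk started at s before first hitting t is at most deg(v)/w(s,t). -/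
section Stmt7AuxSection

open Finset Matrix

namespace Stmt7Aux

variable {V : Type*} [Fintype V] [DecidableEq V]

lemma pow_entry_nonneg (M : Matrix V V ℝ) (h0 : ∀ a b, 0 ≤ M a b) :
    ∀ (n : ℕ) (a b : V), 0 ≤ (M ^ n) a b := by
  intro n
  induction n with
  | zero =>
    intro a b
    simp only [pow_zero, Matrix.one_apply]
    split <;> norm_num
  | succ n ih =>
    intro a b
    rw [pow_succ, Matrix.mul_apply]
    exact Finset.sum_nonneg fun c _ => mul_nonneg (ih a c) (h0 c b)

lemma triangle_swap (f : ℕ → ℕ → ℝ) (N : ℕ) :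
    ∑ n ∈ range N, ∑ j ∈ range (n + 1), f j (n - j)
      = ∑ j ∈ range N, ∑ m ∈ range (N - j), f j m := by
  induction N with
  | zero => simp
  | succ N ih =>
    rw [Finset.sum_range_succ, ih,
      Finset.sum_range_succ (fun j => ∑ m ∈ range (N + 1 - j), f j m)]
    have h1 : ∑ j ∈ range N, (∑ m ∈ range (N + 1 - j), f j m)
        = ∑ j ∈ range N, ((∑ m ∈ range (N - j), f j m) + f j (N - j)) := by
      refine Finset.sum_congr rfl fun j hj => ?_
      have hj' : j ≤ N := le_of_lt (mem_range.mp hj)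
      have h2 : N + 1 - j = (N - j) + 1 := by omega
      rw [h2, Finset.sum_range_succ]
    rw [h1, Finset.sum_add_distrib,
      Finset.sum_range_succ (fun j => f j (N - j))]
    simp [Nat.sub_self]
    ring

lemma green_diag (M : Matrix V V ℝ) (h0 : ∀ a b, 0 ≤ M a b)
    (h1 : ∀ a, ∑ b, M a b ≤ 1) (x s : V) (N : ℕ) :
    ∑ n ∈ range N, (M ^ n) x s ≤ ∑ n ∈ range N, (M ^ n) s s := by
  rcases eq_or_ne x s with rfl | hxs
  · exact le_refl _
  -- T : M with column s zeroed
  set T : Matrix V V ℝ := Matrix.of (fun a b => if b = s then 0 else M a b) with hT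
  have hT0 : ∀ a b, 0 ≤ T a b := by
    intro a b
    simp only [hT, Matrix.of_apply]
    split
    · exact le_refl 0
    · exact h0 a b
  have hTs : ∀ a, T a s = 0 := fun a => by simp [hT]
  -- row sums of T
  have hTrow : ∀ a, ∑ b, T a b = (∑ b, M a b) - M a s := by
    intro a
    have : ∀ b : V, T a b = M a b - (if b = s then M a b else 0) := by
      intro b
      simp only [hT, Matrix.of_apply]
      split <;> simp
    rw [Finset.sum_congr rfl fun b _ => this b, Finset.sum_sub_distrib,
      Finset.sum_ite_eq' univ s (fun b => M a b)]
    simp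
  set c : ℕ → ℝ := fun j => ∑ a, (T ^ j) x a * M a s with hc
  set r : ℕ → ℝ := fun K => ∑ b, (T ^ K) x b with hr
  have hc0 : ∀ j, 0 ≤ c j := fun j =>
    Finset.sum_nonneg fun a _ => mul_nonneg (pow_entry_nonneg T hT0 j x a) (h0 a s)
  have hr0 : ∀ K, 0 ≤ r K := fun K =>
    Finset.sum_nonneg fun b _ => pow_entry_nonneg T hT0 K x b
  have hrc : ∀ K, c K ≤ r K - r (K + 1) := by
    intro K
    have h2 : r (K + 1) = ∑ a, (T ^ K) x a * (∑ b, T a b) := by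
      simp only [hr, pow_succ, Matrix.mul_apply]
      rw [Finset.sum_comm]
      exact Finset.sum_congr rfl fun a _ => (Finset.mul_sum _ _ _).symm
    have h3 : r (K + 1) ≤ ∑ a, (T ^ K) x a * (1 - M a s) := by
      rw [h2]
      refine Finset.sum_le_sum fun a _ => ?_
      refine mul_le_mul_of_nonneg_left ?_ (pow_entry_nonneg T hT0 K x a)
      rw [hTrow a]
      have := h1 a
      linarith
    have h4 : ∑ a, (T ^ K) x a * (1 - M a s) = r K - c K := by
      simp only [hr, hc, mul_one_sub]
      rw [Finset.sum_sub_distrib]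
    linarith [h3, h4 ▸ h3]
  have hcsum : ∀ K, ∑ j ∈ range K, c j ≤ 1 := by
    intro K
    have h5 : ∑ j ∈ range K, c j ≤ ∑ j ∈ range K, (r j - r (j + 1)) :=
      Finset.sum_le_sum fun j _ => hrc j
    rw [Finset.sum_range_sub' r K] at h5
    have hr0' : r 0 = 1 := by
      simp only [hr, pow_zero]
      simp [Matrix.one_apply]
    have := hr0 K
    linarith
  -- decomposition M^(n+1) = T^(n+1) + ∑_j T^j * (M - T) * M^(n - j)
  have key : ∀ X : Matrix V V ℝ, M * X = T * X + (M - T) * X := by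
    intro X
    rw [← add_mul]
    congr 1
    abel
  have hdec : ∀ n, M ^ (n + 1)
      = T ^ (n + 1) + ∑ j ∈ range (n + 1), T ^ j * (M - T) * M ^ (n - j) := by
    intro n
    induction n with
    | zero => simp [pow_one, key]
    | succ n ih =>
      calc M ^ (n + 1 + 1)
          = M * M ^ (n + 1) := pow_succ' M (n + 1)
        _ = T * M ^ (n + 1) + (M - T) * M ^ (n + 1) := key _
        _ = T * (T ^ (n + 1) + ∑ j ∈ range (n + 1), T ^ j * (M - T) * M ^ (n - j))
            + (M - T) * M ^ (n + 1) := by rw [← ih]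
        _ = T ^ (n + 1 + 1) + (∑ j ∈ range (n + 1), T ^ (j + 1) * (M - T) * M ^ (n - j)
            + (M - T) * M ^ (n + 1)) := by
            rw [mul_add, Finset.mul_sum, ← pow_succ' T, add_assoc]
            congr 1
            congr 1
            refine Finset.sum_congr rfl fun j hj => ?_
            rw [pow_succ' T j]
            simp [mul_assoc]
        _ = T ^ (n + 1 + 1) + ∑ j ∈ range (n + 1 + 1), T ^ j * (M - T) * M ^ (n + 1 - j) := by
            congr 1
            rw [Finset.sum_range_succ' (fun j => T ^ j * (M - T) * M ^ (n + 1 - j)) (n + 1)]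
            congr 1
            · refine Finset.sum_congr rfl fun j hj => ?_
              have h6 : n + 1 - (j + 1) = n - j := by omega
              rw [h6]
            · simp
  have hb0 : ∀ m, 0 ≤ (M ^ m) s s := fun m => pow_entry_nonneg M h0 m s s
  have hentry : ∀ n, (M ^ (n + 1)) x s = ∑ j ∈ range (n + 1), c j * (M ^ (n - j)) s s := by
    intro n
    rw [hdec n, Matrix.add_apply, Matrix.sum_apply]
    have hTpow : (T ^ (n + 1)) x s = 0 := by
      rw [pow_succ, Matrix.mul_apply]
      simp [hTs]
    rw [hTpow, zero_add]
    refine Finset.sum_congr rfl fun j hj => ?_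
    rw [Matrix.mul_apply]
    have hAx : ∀ b, (T ^ j * (M - T)) x b = if b = s then c j else 0 := by
      intro b
      rw [Matrix.mul_apply]
      rcases eq_or_ne b s with rfl | hbs
      · rw [if_pos rfl]
        refine Finset.sum_congr rfl fun a _ => ?_
        rw [Matrix.sub_apply, hTs a, sub_zero]
      · rw [if_neg hbs]
        refine Finset.sum_eq_zero fun a _ => ?_
        rw [Matrix.sub_apply]
        simp [hT, hbs]
    calc ∑ b, (T ^ j * (M - T)) x b * (M ^ (n - j)) b s
        = ∑ b, (if b = s then c j * (M ^ (n - j)) b s else 0) := by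
          refine Finset.sum_congr rfl fun b _ => ?_
          rw [hAx b, ite_mul, zero_mul]
      _ = c j * (M ^ (n - j)) s s := by
          rw [Finset.sum_ite_eq' univ s (fun b => c j * (M ^ (n - j)) b s)]
          simp
  -- final assembly
  cases N with
  | zero => simp
  | succ N =>
    rw [Finset.sum_range_succ' (fun n => (M ^ n) x s) N]
    have hx0 : (M ^ 0) x s = 0 := by simp [Matrix.one_apply, hxs]
    rw [hx0, add_zero]
    have hswap : ∑ n ∈ range N, (M ^ (n + 1)) x s
        = ∑ j ∈ range N, ∑ m ∈ range (N - j), c j * (M ^ m) s s := by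
      rw [Finset.sum_congr rfl fun n _ => hentry n]
      exact triangle_swap (fun j m => c j * (M ^ m) s s) N
    rw [hswap]
    calc ∑ j ∈ range N, ∑ m ∈ range (N - j), c j * (M ^ m) s s
        ≤ ∑ j ∈ range N, c j * ∑ m ∈ range N, (M ^ m) s s := by
          refine Finset.sum_le_sum fun j hj => ?_
          rw [← Finset.mul_sum]
          refine mul_le_mul_of_nonneg_left ?_ (hc0 j)
          refine Finset.sum_le_sum_of_subset_of_nonneg ?_ (fun m _ _ => hb0 m)
          exact Finset.range_subset_range.mpr (Nat.sub_le N j)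
      _ = (∑ j ∈ range N, c j) * ∑ m ∈ range N, (M ^ m) s s := by rw [Finset.sum_mul]
      _ ≤ 1 * ∑ m ∈ range N, (M ^ m) s s :=
          mul_le_mul_of_nonneg_right (hcsum N) (Finset.sum_nonneg fun m _ => hb0 m)
      _ = ∑ m ∈ range N, (M ^ m) s s := one_mul _
      _ ≤ ∑ m ∈ range (N + 1), (M ^ m) s s := by
          rw [Finset.sum_range_succ]
          linarith [hb0 N]

end Stmt7Aux

open Stmt7Aux in
theorem stmt7' {V : Type*} [Fintype V] [DecidableEq V]
    (w : V → V → ℝ) (hw : ∀ a b, 0 ≤ w a b)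
    (hconn : ∀ u v : V, Relation.ReflTransGen (fun a b => 0 < w a b) u v)
    (deg : V → ℝ) (hdeg : ∀ v, deg v = ∑ u, w v u) (hdegpos : ∀ v, 0 < deg v)
    (heul : ∀ v, ∑ u, w u v = deg v)
    (P : Matrix V V ℝ) (hP : ∀ a b, P a b = w a b / deg a)
    (v s t : V) (hst : 0 < w s t) :
    (∑' n : ℕ, ((Matrix.of fun a b : V => if b = t then 0 else P a b) ^ n) s v)
      ≤ deg v / w s t := by
  have hdne : ∀ a, deg a ≠ 0 := fun a => ne_of_gt (hdegpos a)
  set Q : Matrix V V ℝ := Matrix.of fun a b : V => if b = t then 0 else P a b with hQ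
  set R : Matrix V V ℝ := Matrix.of fun b a : V => if b = t then 0 else w a b / deg b with hR
  have hQ0 : ∀ a b, 0 ≤ Q a b := by
    intro a b
    simp only [hQ, Matrix.of_apply]
    split
    · exact le_refl 0
    · rw [hP]; exact div_nonneg (hw a b) (le_of_lt (hdegpos a))
  have hR0 : ∀ a b, 0 ≤ R a b := by
    intro a b
    simp only [hR, Matrix.of_apply]
    split
    · exact le_refl 0
    · exact div_nonneg (hw b a) (le_of_lt (hdegpos a))
  have hRrow : ∀ b, ∑ a, R b a ≤ 1 := by
    intro b
    rcases eq_or_ne b t with rfl | hbt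
    · simp [hR]
    · have : ∀ a, R b a = w a b / deg b := by
        intro a
        simp [hR, hbt]
      rw [Finset.sum_congr rfl fun a _ => this a, ← Finset.sum_div, heul b,
        div_self (hdne b)]
  -- reversal identity
  have hrev : ∀ (n : ℕ) (a b : V), deg a * (Q ^ n) a b = deg b * (R ^ n) b a := by
    intro n
    induction n with
    | zero =>
      intro a b
      simp only [pow_zero, Matrix.one_apply]
      rcases eq_or_ne a b with rfl | hab
      · simp
      · simp [hab, Ne.symm hab]
    | succ n ih =>
      intro a b
      have hedge : ∀ c, deg a * Q a c = deg c * R c a := by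
        intro c
        simp only [hQ, hR, Matrix.of_apply]
        split
        · simp
        · rw [hP, mul_comm (deg a), mul_comm (deg c),
            div_mul_cancel₀ _ (hdne a), div_mul_cancel₀ _ (hdne c)]
      calc deg a * (Q ^ (n + 1)) a b
          = ∑ c, (deg a * Q a c) * (Q ^ n) c b := by
            rw [pow_succ' Q, Matrix.mul_apply, Finset.mul_sum]
            exact Finset.sum_congr rfl fun c _ => by ring
        _ = ∑ c, R c a * (deg c * (Q ^ n) c b) := by
            exact Finset.sum_congr rfl fun c _ => by rw [hedge c]; ring
        _ = ∑ c, R c a * (deg b * (R ^ n) b c) := by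
            exact Finset.sum_congr rfl fun c _ => by rw [ih c b]
        _ = deg b * ∑ c, (R ^ n) b c * R c a := by
            rw [Finset.mul_sum]
            exact Finset.sum_congr rfl fun c _ => by ring
        _ = deg b * (R ^ (n + 1)) b a := by rw [pow_succ R, Matrix.mul_apply]
  -- Kac-type telescoping bound
  have hKac : ∀ N : ℕ, w s t * ∑ n ∈ range N, (R ^ n) s s ≤ deg s := by
    intro N
    set A : ℕ → ℝ := fun n => ∑ b, deg b * (R ^ n) b s with hA
    have hA0 : A 0 = deg s := by
      simp only [hA, pow_zero, Matrix.one_apply]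
      rw [Finset.sum_congr rfl (fun b _ => by rw [mul_ite, mul_one, mul_zero]),
        Finset.sum_ite_eq' univ s deg]
      simp
    have hAnn : ∀ n, 0 ≤ A n := by
      intro n
      exact Finset.sum_nonneg fun b _ =>
        mul_nonneg (le_of_lt (hdegpos b)) (pow_entry_nonneg R hR0 n b s)
    have hcol : ∀ c, ∑ b, deg b * R b c = deg c - w c t := by
      intro c
      have h1 : ∀ b, deg b * R b c = w c b - (if b = t then w c b else 0) := by
        intro b
        simp only [hR, Matrix.of_apply]
        split
        · simp
        · rw [mul_comm (deg b), div_mul_cancel₀ _ (hdne b)]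
          simp
      rw [Finset.sum_congr rfl fun b _ => h1 b, Finset.sum_sub_distrib,
        Finset.sum_ite_eq' univ t (fun b => w c b), ← hdeg c]
      simp
    have hstep : ∀ n, A (n + 1) ≤ A n - w s t * (R ^ n) s s := by
      intro n
      have h2 : A (n + 1) = ∑ c, (deg c - w c t) * (R ^ n) c s := by
        simp only [hA]
        calc ∑ b, deg b * (R ^ (n + 1)) b s
            = ∑ b, ∑ c, (deg b * R b c) * (R ^ n) c s := by
              refine Finset.sum_congr rfl fun b _ => ?_
              rw [pow_succ' R, Matrix.mul_apply, Finset.mul_sum]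
              exact Finset.sum_congr rfl fun c _ => by ring
          _ = ∑ c, (∑ b, deg b * R b c) * (R ^ n) c s := by
              rw [Finset.sum_comm]
              exact Finset.sum_congr rfl fun c _ => by rw [Finset.sum_mul]
          _ = ∑ c, (deg c - w c t) * (R ^ n) c s :=
              Finset.sum_congr rfl fun c _ => by rw [hcol c]
      have h3 : ∑ c, w c t * (R ^ n) c s ≥ w s t * (R ^ n) s s := by
        refine Finset.single_le_sum (f := fun c => w c t * (R ^ n) c s)
          (fun c _ => mul_nonneg (hw c t) (pow_entry_nonneg R hR0 n c s))
          (Finset.mem_univ s)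
      have h4 : A (n + 1) = A n - ∑ c, w c t * (R ^ n) c s := by
        rw [h2, hA]
        rw [← Finset.sum_sub_distrib]
        exact Finset.sum_congr rfl fun c _ => by ring
      linarith
    have htel : ∀ N, ∑ n ∈ range N, w s t * (R ^ n) s s ≤ A 0 - A N := by
      intro N
      induction N with
      | zero => simp
      | succ N ih =>
        rw [Finset.sum_range_succ]
        have := hstep N
        linarith
    have h5 := htel N
    rw [← Finset.mul_sum] at h5
    linarith [hAnn N, hA0]
  -- assemble
  refine Real.tsum_le_of_sum_range_le (fun n => pow_entry_nonneg Q hQ0 n s v) ?_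
  intro N
  have h7 : ∀ n, (Q ^ n) s v = deg v * (R ^ n) v s / deg s := by
    intro n
    rw [eq_div_iff (hdne s)]
    linarith [hrev n s v]
  rw [Finset.sum_congr rfl fun n _ => h7 n]
  rw [← Finset.sum_div, ← Finset.mul_sum]
  rw [div_le_div_iff₀ (hdegpos s) hst]
  have hgd := green_diag R hR0 hRrow v s N
  have hK := hKac N
  have hv := le_of_lt (hdegpos v)
  have h10 : w s t * ∑ n ∈ range N, (R ^ n) v s ≤ deg s :=
    le_trans (mul_le_mul_of_nonneg_left hgd (le_of_lt hst)) hK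
  nlinarith [mul_le_mul_of_nonneg_left h10 hv]

end Stmt7AuxSection

/-- In a finite strongly connected weighted directed Eulerian graph with an
edge `(s,t)` of weight `w s t > 0`, the expected number of visits to `v` by
the natural random walk started at `s` before first hitting `t` is at most
`deg v / w s t`. -/
theorem stmt7 {V : Type*} [Fintype V] [DecidableEq V]
    (w : V → V → ℝ) (hw : ∀ a b, 0 ≤ w a b)
    (hconn : ∀ u v : V, Relation.ReflTransGen (fun a b => 0 < w a b) u v)
    (deg : V → ℝ) (hdeg : ∀ v, deg v = ∑ u, w v u) (hdegpos : ∀ v, 0 < deg v)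
    (heul : ∀ v, ∑ u, w u v = deg v)
    (P : Matrix V V ℝ) (hP : ∀ a b, P a b = w a b / deg a)
    (v s t : V) (hst : 0 < w s t) :
    visitsBefore P v s t ≤ deg v / w s t := by
  unfold visitsBefore
  exact stmt7' w hw hconn deg hdeg hdegpos heul P hP v s t hst
end

section
/- Let X_0, X_1, ... be a random walk on a finite Eulerian weighted digraph started at s, let τ be the cover time (the first time every vertex has been visited), and suppose the graph on n vertices is strongly connected by edges of weight at least w_c. Then the expected number of visits to s before time τ is at most n²·deg(s)/w_c. -/
/-- The kernel of the Markov chain that tracks the current vertex together with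
the set of vertices visited so far. -/
noncomputable def coverKernel {V : Type*} [Fintype V] [DecidableEq V]
    (P : Matrix V V ℝ) : Matrix (V × Finset V) (V × Finset V) ℝ :=
  Matrix.of fun p q => if q.2 = insert q.1 p.2 then P p.1 q.1 else 0

/-- `visitsBeforeCover P s v` is the expected number of times `n ≥ 0` at which
the chain started at `s` is at `v` while not all vertices have been visited
yet, i.e. the expected number of visits to `v` strictly before the cover
time `τ`. -/
noncomputable def visitsBeforeCover {V : Type*} [Fintype V] [DecidableEq V]
    (P : Matrix V V ℝ) (s v : V) : ℝ :=
  ∑' n : ℕ, ∑ A ∈ Finset.univ.filter (fun A : Finset V => A ≠ Finset.univ),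
    ((coverKernel P) ^ n) (s, {s}) (v, A)


private def stepsRel {V : Type*} (R : V → V → Prop) : ℕ → V → V → Prop
  | 0, a, b => a = b
  | (k+1), a, c => ∃ b, stepsRel R k a b ∧ R b c

private lemma reflTransGen_stepsRel {V : Type*} {R : V → V → Prop} {a b : V}
    (h : Relation.ReflTransGen R a b) : ∃ k, stepsRel R k a b := by
  induction h with
  | refl => exact ⟨0, rfl⟩
  | tail _ hbc ih => obtain ⟨k, hk⟩ := ih; exact ⟨k+1, _, hk, hbc⟩

private lemma exists_dist {V : Type*} [Fintype V] [DecidableEq V]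
    (R : V → V → Prop) (s : V) (hconn : ∀ v, Relation.ReflTransGen R s v) :
    ∃ d : V → ℕ, d s = 0 ∧ (∀ v, v ≠ s → ∃ u, R u v ∧ d u < d v) ∧
      2 * (∑ v, d v) ≤ Fintype.card V * (Fintype.card V - 1) := by
  have hre : ∀ v, ∃ k, stepsRel R k s v := fun v => reflTransGen_stepsRel (hconn v)
  classical
  set d : V → ℕ := fun v => Nat.find (hre v) with hdDef
  have hd : ∀ v, stepsRel R (d v) s v := fun v => Nat.find_spec (hre v)
  have hmin : ∀ v k, stepsRel R k s v → d v ≤ k := fun v k hk => Nat.find_min' (hre v) hk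
  have hds : d s = 0 := Nat.le_zero.mp (hmin s 0 rfl)
  have hstep : ∀ v, v ≠ s → ∃ u, R u v ∧ d u < d v := by
    intro v hv
    rcases hm : d v with _ | m
    · exact absurd ((hm ▸ hd v) : stepsRel R 0 s v).symm hv
    · obtain ⟨u, hu, huv⟩ := (hm ▸ hd v : stepsRel R (m+1) s v)
      exact ⟨u, huv, lt_of_le_of_lt (hmin u m hu) (by omega)⟩
  have hup : ∀ u v, R u v → d v ≤ d u + 1 := fun u v h => hmin v _ ⟨u, hd u, h⟩
  have hgap : ∀ k : ℕ, (∃ v, k < d v) → ∃ v, d v = k + 1 := by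
    intro k hex
    obtain ⟨v0, hv0⟩ := hex
    obtain ⟨v, hvmem, hvmin⟩ := Finset.exists_min_image
      (Finset.univ.filter fun v => k < d v) d ⟨v0, by simp [hv0]⟩
    simp only [Finset.mem_filter, Finset.mem_univ, true_and] at hvmem
    have hvs : v ≠ s := fun h => by rw [h, hds] at hvmem; omega
    obtain ⟨u, huv, hultv⟩ := hstep v hvs
    have hduk : d u ≤ k := by
      by_contra h
      have hmem : u ∈ Finset.univ.filter fun v => k < d v := by
        simp only [Finset.mem_filter, Finset.mem_univ, true_and]; omega
      have := hvmin u hmem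
      omega
    have := hup u v huv
    exact ⟨v, by omega⟩
  set c : ℕ → ℕ := fun k => (Finset.univ.filter fun v => d v ≤ k).card with hcDef
  obtain ⟨m, hn⟩ : ∃ m, Fintype.card V = m + 1 := by
    have : 0 < Fintype.card V := Fintype.card_pos_iff.mpr ⟨s⟩
    exact ⟨Fintype.card V - 1, by omega⟩
  have hcmono : ∀ k, c k ≤ c (k+1) := by
    intro k
    apply Finset.card_le_card
    apply Finset.monotone_filter_right
    intro v hv; omega
  have hcle : ∀ k, c k ≤ m + 1 := by
    intro k
    rw [hcDef]
    calc (Finset.univ.filter fun v => d v ≤ k).card ≤ Finset.univ.card :=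
          Finset.card_filter_le _ _
      _ = m + 1 := by rw [Finset.card_univ, hn]
  have hck : ∀ k, min (k+1) (m+1) ≤ c k := by
    intro k
    induction k with
    | zero =>
      have hmem : s ∈ Finset.univ.filter fun v => d v ≤ 0 := by simp [hds]
      have := Finset.card_pos.mpr ⟨s, hmem⟩
      simp only [hcDef]; omega
    | succ k ih =>
      by_cases h : m + 1 ≤ c k
      · have := hcmono k
        simp only [min_le_iff]; omega
      · have hne : ∃ v, k < d v := by
          by_contra hno
          push_neg at hno
          have heq : (Finset.univ.filter fun v => d v ≤ k) = Finset.univ := by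
            apply Finset.filter_true_of_mem; intro v _; exact hno v
          rw [hcDef] at h
          simp only [heq, Finset.card_univ, hn] at h
          omega
        obtain ⟨v1, hv1⟩ := hgap k hne
        have hss : (Finset.univ.filter fun v => d v ≤ k) ⊂ (Finset.univ.filter fun v => d v ≤ k+1) := by
          rw [Finset.ssubset_iff_of_subset
            (Finset.monotone_filter_right _ (fun v _ (hv : d v ≤ k) => by omega))]
          exact ⟨v1, by simp [hv1], by simp [hv1]⟩
        have hlt := Finset.card_lt_card hss
        simp only [min_le_iff] at ih ⊢
        rcases ih with h1 | h1
        · left; simp only [hcDef] at *; omega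
        · omega
  have hdmax : ∀ v, d v ≤ m := by
    intro v
    have h1 := hck m
    have h2 := hcle m
    have hteq : (Finset.univ.filter fun v => d v ≤ m) = Finset.univ := by
      apply Finset.eq_univ_of_card
      rw [hn]
      simp only [hcDef] at h1 h2
      omega
    have hv : v ∈ Finset.univ.filter fun v => d v ≤ m := by
      rw [hteq]; exact Finset.mem_univ v
    simpa using hv
  refine ⟨d, hds, hstep, ?_⟩
  have hrepr : ∀ v, d v = ∑ k ∈ Finset.range m, if k < d v then 1 else 0 := by
    intro v
    rw [← Finset.sum_filter]
    have heq : (Finset.range m).filter (fun k => k < d v) = Finset.range (d v) := by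
      ext k
      simp only [Finset.mem_filter, Finset.mem_range]
      have := hdmax v
      omega
    simp [heq]
  have hcard : ∀ k, (Finset.univ.filter fun v => k < d v).card = m + 1 - c k := by
    intro k
    have h4 := Finset.card_filter_add_card_filter_not
      (s := (Finset.univ : Finset V)) (p := fun v => d v ≤ k)
    have h3 : (Finset.filter (fun v => ¬ d v ≤ k) Finset.univ)
        = (Finset.filter (fun v => k < d v) Finset.univ) := by
      apply Finset.filter_congr; intro v _
      constructor <;> (intro; omega)
    rw [h3, Finset.card_univ, hn] at h4
    simp only [hcDef] at *
    omega
  calc 2 * ∑ v, d v = 2 * ∑ v, ∑ k ∈ Finset.range m, if k < d v then 1 else 0 := by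
        rw [Finset.sum_congr rfl (fun v _ => hrepr v)]
    _ = 2 * ∑ k ∈ Finset.range m, (Finset.univ.filter fun v => k < d v).card := by
        rw [Finset.sum_comm]
        congr 1
        refine Finset.sum_congr rfl (fun k _ => ?_)
        rw [← Finset.sum_filter]
        simp
    _ ≤ 2 * ∑ k ∈ Finset.range m, (m - k) := by
        apply Nat.mul_le_mul_left
        apply Finset.sum_le_sum
        intro k hk
        simp only [Finset.mem_range] at hk
        have h1 := hck k
        rw [hcard k]
        have : min (k+1) (m+1) = k+1 := by omega
        omega
    _ = 2 * ∑ k ∈ Finset.range m, (k + 1) := by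
        congr 1
        rw [← Finset.sum_range_reflect (fun j => m - j) m]
        refine Finset.sum_congr rfl (fun k hk => ?_)
        simp only [Finset.mem_range] at hk
        omega
    _ ≤ Fintype.card V * (Fintype.card V - 1) := by
        rw [Finset.sum_add_distrib]
        simp only [Finset.sum_const, Finset.card_range, smul_eq_mul, mul_one]
        have hg := Finset.sum_range_id_mul_two m
        rw [hn]
        simp only [Nat.add_sub_cancel]
        calc 2 * ((∑ k ∈ Finset.range m, k) + m) = (∑ k ∈ Finset.range m, k) * 2 + 2 * m := by ring
          _ = m * (m-1) + 2*m := by rw [hg]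
          _ ≤ (m+1) * m := by rcases m with _ | l
                              · simp
                              · simp only [Nat.add_sub_cancel]; ring_nf; omega


private lemma minPrinciple {V : Type*} [Fintype V] [DecidableEq V]
    (P : Matrix V V ℝ) (hP0 : ∀ a b, 0 ≤ P a b) (hrow : ∀ a, ∑ u, P a u = 1)
    (R : V → V → Prop) (hR : ∀ u v, R u v → 0 < P u v)
    (x : V) (hconn : ∀ v, Relation.ReflTransGen R v x)
    (ρ : V → ℝ) (hx : 0 ≤ ρ x) (hsup : ∀ v, v ≠ x → ∑ u, P v u * ρ u ≤ ρ v) :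
    ∀ v, 0 ≤ ρ v := by
  obtain ⟨v₀, -, hv₀min⟩ := Finset.exists_min_image Finset.univ ρ ⟨x, Finset.mem_univ x⟩
  have hv₀min : ∀ u, ρ v₀ ≤ ρ u := fun u => hv₀min u (Finset.mem_univ u)
  suffices h : 0 ≤ ρ v₀ by exact fun v => le_trans h (hv₀min v)
  by_contra hneg
  push_neg at hneg
  have key : ∀ v, Relation.ReflTransGen R v x → ρ v = ρ v₀ → False := by
    intro v hv
    induction hv using Relation.ReflTransGen.head_induction_on with
    | refl => intro h; rw [h] at hx; linarith
    | head hab hbx ih =>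
      rename_i a b
      intro ha
      have hax : a ≠ x := by
        intro h; rw [h] at ha; rw [ha] at hx; linarith
      have h1 : ∑ u, P a u * ρ u ≤ ρ a := hsup a hax
      have h2 : ∑ u, P a u * (ρ u - ρ v₀) ≤ 0 := by
        have : ∑ u, P a u * (ρ u - ρ v₀) = (∑ u, P a u * ρ u) - ρ v₀ := by
          simp only [mul_sub]
          rw [Finset.sum_sub_distrib, ← Finset.sum_mul, hrow a, one_mul]
        rw [this, ha] at *
        linarith
      have h3 : ∀ u ∈ Finset.univ, (0:ℝ) ≤ P a u * (ρ u - ρ v₀) :=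
        fun u _ => mul_nonneg (hP0 a u) (by have := hv₀min u; linarith)
      have h4 : ∑ u, P a u * (ρ u - ρ v₀) = 0 :=
        le_antisymm h2 (Finset.sum_nonneg h3)
      have h5 := (Finset.sum_eq_zero_iff_of_nonneg h3).mp h4 b (Finset.mem_univ b)
      have h6 : ρ b = ρ v₀ := by
        have := hR a b hab
        rcases mul_eq_zero.mp h5 with h | h
        · linarith
        · linarith
      exact ih h6
  exact key v₀ (hconn v₀) rfl

private lemma exists_hit {V : Type*} [Fintype V] [DecidableEq V]
    (P : Matrix V V ℝ) (hP0 : ∀ a b, 0 ≤ P a b) (hrow : ∀ a, ∑ u, P a u = 1)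
    (R : V → V → Prop) (hR : ∀ u v, R u v → 0 < P u v)
    (hconn : ∀ u v, Relation.ReflTransGen R u v) (t : V) :
    ∃ φ : V → ℝ, φ t = 0 ∧ (∀ v, v ≠ t → φ v = 1 + ∑ u, P v u * φ u) ∧ (∀ v, 0 ≤ φ v) := by
  classical
  let L : (V → ℝ) →ₗ[ℝ] (V → ℝ) :=
    { toFun := fun f v => if v = t then f t else f v - ∑ u, P v u * f u
      map_add' := by
        intro f g; funext v
        by_cases h : v = t <;>
          simp [h, mul_add, Finset.sum_add_distrib] <;> ring
      map_smul' := by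
        intro c f; funext v
        by_cases h : v = t
        · simp [h]
        · simp only [h, if_false, Pi.smul_apply, smul_eq_mul, mul_sub, Finset.mul_sum,
            RingHom.id_apply]
          congr 1
          refine Finset.sum_congr rfl (fun u _ => by ring) }
  have hinj : Function.Injective L := by
    rw [injective_iff_map_eq_zero]
    intro f hf
    have hft : f t = 0 := by
      have := congrFun hf t
      simpa [L] using this
    have hfv : ∀ v, v ≠ t → f v = ∑ u, P v u * f u := by
      intro v hv
      have := congrFun hf v
      simp only [L, LinearMap.coe_mk, AddHom.coe_mk, if_neg hv, Pi.zero_apply] at this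
      linarith
    have h1 : ∀ v, 0 ≤ f v := by
      apply minPrinciple P hP0 hrow R hR t (fun v => hconn v t) f (le_of_eq hft.symm)
      intro v hv; rw [← hfv v hv]
    have h2 : ∀ v, 0 ≤ -f v := by
      apply minPrinciple P hP0 hrow R hR t (fun v => hconn v t) (fun v => -f v)
        (by simp [hft])
      intro v hv
      have : ∑ u, P v u * -f u = -∑ u, P v u * f u := by
        simp [Finset.sum_neg_distrib]
      rw [this, ← hfv v hv]
    funext v
    have := h1 v; have := h2 v
    simp only [Pi.zero_apply]
    linarith
  have hsurj : Function.Surjective L := (LinearMap.injective_iff_surjective).mp hinj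
  obtain ⟨φ, hφ⟩ := hsurj (fun v => if v = t then 0 else 1)
  have hφt : φ t = 0 := by
    have := congrFun hφ t
    simpa [L] using this
  have hφv : ∀ v, v ≠ t → φ v = 1 + ∑ u, P v u * φ u := by
    intro v hv
    have := congrFun hφ v
    simp only [L, LinearMap.coe_mk, AddHom.coe_mk, if_neg hv] at this
    linarith
  refine ⟨φ, hφt, hφv, ?_⟩
  apply minPrinciple P hP0 hrow R hR t (fun v => hconn v t) φ (le_of_eq hφt.symm)
  intro v hv
  rw [hφv v hv]
  have : (0:ℝ) ≤ 1 := zero_le_one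
  linarith


section Aux
variable {V : Type*} [Fintype V] [DecidableEq V]

private lemma kpow_nonneg (P : Matrix V V ℝ) (hP0 : ∀ a b, 0 ≤ P a b) :
    ∀ (N : ℕ) (p q : V × Finset V), 0 ≤ ((coverKernel P) ^ N) p q := by
  intro N
  induction N with
  | zero =>
    intro p q
    simp only [pow_zero, Matrix.one_apply]
    split <;> norm_num
  | succ N ih =>
    intro p q
    rw [pow_succ, Matrix.mul_apply]
    apply Finset.sum_nonneg
    intro r _
    apply mul_nonneg (ih p r)
    simp only [coverKernel, Matrix.of_apply]
    split
    · exact hP0 _ _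
    · exact le_refl 0

private lemma kpow_inv (P : Matrix V V ℝ) (s : V) :
    ∀ (N : ℕ) (p : V × Finset V), p.1 ∉ p.2 →
      ((coverKernel P) ^ N) (s, ({s} : Finset V)) p = 0 := by
  intro N
  cases N with
  | zero =>
    intro p hp
    simp only [pow_zero, Matrix.one_apply]
    rw [if_neg]
    intro h
    rw [← h] at hp
    simp at hp
  | succ N =>
    intro p hp
    rw [pow_succ, Matrix.mul_apply]
    apply Finset.sum_eq_zero
    intro r _
    have : coverKernel P r p = 0 := by
      simp only [coverKernel, Matrix.of_apply]
      rw [if_neg]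
      intro h
      rw [h] at hp
      simp at hp
    rw [this, mul_zero]

end Aux

section Pot
variable {V : Type*} [Fintype V] [DecidableEq V]

private lemma potential_bound (P : Matrix V V ℝ) (hP0 : ∀ a b, 0 ≤ P a b) (s : V)
    (G : V → V → ℝ) (hG0 : ∀ t v, 0 ≤ G t v)
    (hGid : ∀ t v, v ≠ t → G t v = (if v = s then (1:ℝ) else 0) + ∑ u, P v u * G t u) :
    visitsBeforeCover P s s ≤ ∑ t ∈ ({s} : Finset V)ᶜ, G t s := by
  classical
  set K := coverKernel P with hK
  set start : V × Finset V := (s, ({s} : Finset V)) with hstart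
  set f : V × Finset V → ℝ := fun p => ∑ t ∈ p.2ᶜ, G t p.1 with hf
  have hfnn : ∀ p, 0 ≤ f p := fun p => Finset.sum_nonneg (fun t _ => hG0 t p.1)
  -- step inequality
  have hstepB : ∀ p : V × Finset V, p.1 ∈ p.2 →
      (if p.1 = s ∧ p.2 ≠ Finset.univ then (1:ℝ) else 0) + ∑ q, K p q * f q ≤ f p := by
    rintro ⟨v, A⟩ hvA
    simp only at hvA ⊢
    have h1 : ∑ q : V × Finset V, K (v, A) q * f q = ∑ u, P v u * f (u, insert u A) := by
      rw [Fintype.sum_prod_type]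
      refine Finset.sum_congr rfl (fun u _ => ?_)
      simp only [hK, coverKernel, Matrix.of_apply]
      rw [Finset.sum_eq_single (insert u A)]
      · simp
      · intro B _ hB
        rw [if_neg hB, zero_mul]
      · simp
    have h2 : ∀ u, f (u, insert u A) ≤ ∑ t ∈ Aᶜ, G t u := by
      intro u
      apply Finset.sum_le_sum_of_subset_of_nonneg
      · exact Finset.compl_subset_compl.mpr (Finset.subset_insert u A)
      · exact fun t _ _ => hG0 t u
    have h3 : ∑ u, P v u * f (u, insert u A) ≤ ∑ t ∈ Aᶜ, (G t v - if v = s then 1 else 0) := by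
      calc ∑ u, P v u * f (u, insert u A)
          ≤ ∑ u, P v u * ∑ t ∈ Aᶜ, G t u := by
            apply Finset.sum_le_sum
            exact fun u _ => mul_le_mul_of_nonneg_left (h2 u) (hP0 v u)
        _ = ∑ t ∈ Aᶜ, ∑ u, P v u * G t u := by
            simp_rw [Finset.mul_sum]
            rw [Finset.sum_comm]
        _ = ∑ t ∈ Aᶜ, (G t v - if v = s then 1 else 0) := by
            refine Finset.sum_congr rfl (fun t ht => ?_)
            have hvt : v ≠ t := by
              intro h
              rw [Finset.mem_compl] at ht
              exact ht (h ▸ hvA)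
            rw [hGid t v hvt]
            ring
    have h4 : ∑ t ∈ Aᶜ, (G t v - if v = s then 1 else 0)
        = f (v, A) - Aᶜ.card * (if v = s then 1 else 0) := by
      rw [Finset.sum_sub_distrib, Finset.sum_const, nsmul_eq_mul]
    have h5 : (if v = s ∧ A ≠ Finset.univ then (1:ℝ) else 0)
        ≤ Aᶜ.card * (if v = s then 1 else 0) := by
      by_cases hA : A = Finset.univ
      · simp only [hA, ne_eq, not_true_eq_false, and_false, if_false]
        positivity
      · have hcard : 1 ≤ (Aᶜ.card : ℝ) := by
          have : Aᶜ.Nonempty := by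
            rw [← Finset.card_compl_lt_iff_nonempty (s := Aᶜ)]
            · simpa using Finset.card_lt_card (Finset.ssubset_univ_iff.mpr hA)
          have := Finset.card_pos.mpr this
          exact_mod_cast this
        by_cases hv : v = s
        · simp only [hv, hA, ne_eq, not_false_eq_true, and_true, if_true, mul_one]
          simpa using hcard
        · simp [hv]
    rw [h1]
    calc (if v = s ∧ A ≠ Finset.univ then (1:ℝ) else 0) + ∑ u, P v u * f (u, insert u A)
        ≤ Aᶜ.card * (if v = s then 1 else 0) + (f (v, A) - Aᶜ.card * (if v = s then 1 else 0)) := by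
          have := h3.trans (le_of_eq h4)
          exact add_le_add h5 this
      _ = f (v, A) := by ring
  set F : ℕ → ℝ := fun N => ∑ p : V × Finset V, (K ^ N) start p * f p with hF
  set g : ℕ → ℝ := fun N => ∑ A ∈ Finset.univ.filter (fun A : Finset V => A ≠ Finset.univ),
    (K ^ N) start (s, A) with hg
  have hgnn : ∀ N, 0 ≤ g N := by
    intro N
    apply Finset.sum_nonneg
    intro A _
    exact kpow_nonneg P hP0 N start (s, A)
  have hF0 : F 0 = f start := by
    simp only [hF, pow_zero, Matrix.one_apply]
    rw [Finset.sum_eq_single start]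
    · simp
    · intro p _ hp
      rw [if_neg (fun h => hp h.symm), zero_mul]
    · simp
  have hFnn : ∀ N, 0 ≤ F N := by
    intro N
    apply Finset.sum_nonneg
    intro p _
    exact mul_nonneg (kpow_nonneg P hP0 N start p) (hfnn p)
  have hFD : ∀ N, g N + F (N + 1) ≤ F N := by
    intro N
    have hexp : F (N + 1) = ∑ p : V × Finset V, (K ^ N) start p * (∑ q, K p q * f q) := by
      simp only [hF, pow_succ, Matrix.mul_apply, Finset.sum_mul, Finset.mul_sum, mul_assoc]
      rw [Finset.sum_comm]
    have hgle : g N ≤ ∑ p : V × Finset V, (K ^ N) start p *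
        (if p.1 = s ∧ p.2 ≠ Finset.univ then (1:ℝ) else 0) := by
      rw [Fintype.sum_prod_type]
      have hnn : ∀ v ∈ (Finset.univ : Finset V), (0:ℝ) ≤ ∑ A : Finset V,
          (K ^ N) start (v, A) * (if (v, A).1 = s ∧ (v, A).2 ≠ Finset.univ then (1:ℝ) else 0) := by
        intro v _
        apply Finset.sum_nonneg
        intro A _
        apply mul_nonneg (kpow_nonneg P hP0 N start (v, A))
        split <;> norm_num
      refine le_trans ?_ (Finset.single_le_sum hnn (Finset.mem_univ s))
      calc g N = ∑ A : Finset V, if A ≠ Finset.univ then (K ^ N) start (s, A) else 0 := by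
            simp only [hg]
            exact Finset.sum_filter _ _
        _ = ∑ A : Finset V, (K ^ N) start (s, A)
              * (if (s, A).1 = s ∧ (s, A).2 ≠ Finset.univ then (1:ℝ) else 0) := by
            refine Finset.sum_congr rfl (fun A _ => ?_)
            by_cases hA : A = Finset.univ <;> simp [hA]
        _ ≤ ∑ A : Finset V, (K ^ N) start (s, A)
              * (if (s, A).1 = s ∧ (s, A).2 ≠ Finset.univ then (1:ℝ) else 0) := le_refl _
    calc g N + F (N + 1)
        ≤ (∑ p : V × Finset V, (K ^ N) start p *
            (if p.1 = s ∧ p.2 ≠ Finset.univ then (1:ℝ) else 0))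
          + ∑ p : V × Finset V, (K ^ N) start p * (∑ q, K p q * f q) := by
          rw [hexp]; exact add_le_add hgle (le_refl _)
      _ = ∑ p : V × Finset V, (K ^ N) start p *
            ((if p.1 = s ∧ p.2 ≠ Finset.univ then (1:ℝ) else 0) + ∑ q, K p q * f q) := by
          rw [← Finset.sum_add_distrib]
          exact Finset.sum_congr rfl (fun p _ => by ring)
      _ ≤ F N := by
          apply Finset.sum_le_sum
          intro p _
          by_cases hp : p.1 ∈ p.2
          · exact mul_le_mul_of_nonneg_left (hstepB p hp) (kpow_nonneg P hP0 N start p)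
          · rw [kpow_inv P s N p hp]
            simp
  have hpartial : ∀ N, (∑ n ∈ Finset.range N, g n) + F N ≤ f start := by
    intro N
    induction N with
    | zero => simp [hF0.symm, le_refl]
    | succ N ih =>
      rw [Finset.sum_range_succ]
      have := hFD N
      linarith
  have hsum : ∀ N, ∑ n ∈ Finset.range N, g n ≤ f start := by
    intro N
    have := hpartial N
    have := hFnn N
    linarith
  have hmain : visitsBeforeCover P s s ≤ f start := by
    have hsummable : Summable g := summable_of_sum_range_le hgnn hsum
    have : visitsBeforeCover P s s = ∑' n, g n := rfl
    rw [this]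
    exact Summable.tsum_le_of_sum_range_le hsummable hsum
  exact hmain

end Pot

/-- In a finite Eulerian weighted digraph on `n` vertices strongly connected by
edges of weight at least `w_c`, the expected number of visits to `s` by the
natural random walk started at `s` before the cover time is at most
`n^2 * deg s / w_c`. -/
theorem stmt9 {V : Type*} [Fintype V] [DecidableEq V]
    (w : V → V → ℝ) (hw : ∀ a b, 0 ≤ w a b)
    (wc : ℝ) (hwc : 0 < wc)
    (hconn : ∀ u v : V, Relation.ReflTransGen (fun a b => wc ≤ w a b) u v)
    (deg : V → ℝ) (hdeg : ∀ v, deg v = ∑ u, w v u) (hdegpos : ∀ v, 0 < deg v)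
    (heul : ∀ v, ∑ u, w u v = deg v)
    (P : Matrix V V ℝ) (hP : ∀ a b, P a b = w a b / deg a)
    (s : V) :
    visitsBeforeCover P s s ≤ (Fintype.card V : ℝ) ^ 2 * deg s / wc := by
  classical
  set R : V → V → Prop := fun a b => wc ≤ w a b with hRdef
  have hP0 : ∀ a b, 0 ≤ P a b := fun a b => by
    rw [hP]; exact div_nonneg (hw a b) (hdegpos a).le
  have hrow : ∀ a, ∑ u, P a u = 1 := by
    intro a
    simp only [hP]
    rw [← Finset.sum_div, ← hdeg a, div_self (hdegpos a).ne']
  have hRpos : ∀ u v, R u v → 0 < P u v := by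
    intro u v h
    rw [hP]
    exact div_pos (lt_of_lt_of_le hwc h) (hdegpos u)
  set D := ∑ v, deg v with hDdef
  have hD0 : 0 < D := Finset.sum_pos (fun v _ => hdegpos v) ⟨s, Finset.mem_univ s⟩
  have hdegD : ∀ v, deg v ≤ D :=
    fun v => Finset.single_le_sum (fun u _ => (hdegpos u).le) (Finset.mem_univ v)
  choose φ hφt hφeq hφnn using fun t => exists_hit P hP0 hrow R hRpos hconn t
  -- Kac's formula
  have hkac : ∀ t, ∑ u, P t u * φ t u = (D - deg t) / deg t := by
    intro t
    have hswap : ∑ v, deg v * ∑ u, P v u * φ t u = ∑ v, deg v * φ t v := by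
      calc ∑ v, deg v * ∑ u, P v u * φ t u
          = ∑ v, ∑ u, w v u * φ t u := by
            refine Finset.sum_congr rfl (fun v _ => ?_)
            rw [Finset.mul_sum]
            refine Finset.sum_congr rfl (fun u _ => ?_)
            rw [hP]
            field_simp [(hdegpos v).ne']
        _ = ∑ u, (∑ v, w v u) * φ t u := by
            rw [Finset.sum_comm]
            simp_rw [Finset.sum_mul]
        _ = ∑ v, deg v * φ t v := by simp_rw [heul]
    have hzero : ∑ v, deg v * (φ t v - ∑ u, P v u * φ t u) = 0 := by
      simp only [mul_sub]
      rw [Finset.sum_sub_distrib, hswap]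
      ring
    have hsplit : ∑ v, deg v * (φ t v - ∑ u, P v u * φ t u)
        = deg t * (0 - ∑ u, P t u * φ t u) + ∑ v ∈ Finset.univ.erase t, deg v * 1 := by
      rw [← Finset.add_sum_erase _ _ (Finset.mem_univ t), hφt t]
      congr 1
      refine Finset.sum_congr rfl (fun v hv => ?_)
      have hvt : v ≠ t := (Finset.mem_erase.mp hv).1
      have h1 : φ t v - ∑ u, P v u * φ t u = 1 := by
        have := hφeq t v hvt
        linarith
      rw [h1, mul_one]
    have herase : ∑ v ∈ Finset.univ.erase t, deg v * 1 = D - deg t := by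
      simp only [mul_one]
      rw [Finset.sum_erase_eq_sub (Finset.mem_univ t)]
    rw [hsplit, herase] at hzero
    have hdt := hdegpos t
    field_simp
    linarith
  -- edge bound
  have hedge : ∀ a b, R a b → φ a b ≤ D / wc := by
    intro a b hab
    have h1 : P a b * φ a b ≤ ∑ u, P a u * φ a u :=
      Finset.single_le_sum (fun u _ => mul_nonneg (hP0 a u) (hφnn a u)) (Finset.mem_univ b)
    rw [hkac a] at h1
    have hda := hdegpos a
    have h2 : w a b * φ a b ≤ D - deg a := by
      have h3 := mul_le_mul_of_nonneg_right h1 hda.le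
      rw [hP] at h3
      field_simp at h3
      linarith
    have h4 : wc * φ a b ≤ w a b * φ a b :=
      mul_le_mul_of_nonneg_right hab (hφnn a b)
    rw [le_div_iff₀ hwc]
    nlinarith [hdegpos a]
  -- triangle inequality
  have htri : ∀ t m v, φ t v ≤ φ m v + φ t m := by
    intro t m v
    have key : ∀ x, 0 ≤ φ m x + φ t m - φ t x := by
      apply minPrinciple P hP0 hrow R hRpos m (fun x => hconn x m)
        (fun x => φ m x + φ t m - φ t x)
      · rw [hφt m]; simp
      · intro x hxm
        have hsum : ∑ u, P x u * (φ m u + φ t m - φ t u)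
            = (∑ u, P x u * φ m u) + φ t m - ∑ u, P x u * φ t u := by
          have : ∀ u, P x u * (φ m u + φ t m - φ t u)
              = P x u * φ m u + P x u * φ t m - P x u * φ t u := fun u => by ring
          simp_rw [this]
          rw [Finset.sum_sub_distrib, Finset.sum_add_distrib, ← Finset.sum_mul, hrow, one_mul]
        rw [hsum]
        have h1 : ∑ u, P x u * φ m u = φ m x - 1 := by
          have := hφeq m x hxm; linarith
        by_cases hxt : x = t
        · subst hxt
          rw [hkac x, h1, hφt x]
          have : (0:ℝ) ≤ (D - deg x) / deg x :=
            div_nonneg (by have := hdegD x; linarith) (hdegpos x).le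
          linarith
        · have h2 : ∑ u, P x u * φ t u = φ t x - 1 := by
            have := hφeq t x hxt; linarith
          rw [h1, h2]
          linarith
    have := key v
    linarith
  -- distances
  obtain ⟨d1, hd1s, hd1step, hd1sum⟩ := exists_dist R s (fun v => hconn s v)
  obtain ⟨d2, hd2s, hd2step, hd2sum⟩ :=
    exists_dist (Function.swap R) s (fun v => (hconn v s).swap)
  have hDwc : 0 ≤ D / wc := div_nonneg hD0.le hwc.le
  have hb2 : ∀ t, φ s t ≤ (d1 t : ℝ) * (D / wc) := by
    have key : ∀ k t, d1 t = k → φ s t ≤ (k : ℝ) * (D / wc) := by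
      intro k
      induction k using Nat.strong_induction_on with
      | _ k ih =>
        intro t hk
        by_cases hts : t = s
        · rw [hts, hφt s]
          positivity
        · obtain ⟨u, hut, hdu⟩ := hd1step t hts
          rw [hk] at hdu
          have h1 : φ s t ≤ φ u t + φ s u := htri s u t
          have h2 : φ u t ≤ D / wc := hedge u t hut
          have h3 : φ s u ≤ (d1 u : ℝ) * (D / wc) := ih (d1 u) hdu u rfl
          have hcast : (d1 u : ℝ) + 1 ≤ (k : ℝ) := by exact_mod_cast hdu
          nlinarith
    exact fun t => key (d1 t) t rfl
  have hb1 : ∀ t, φ t s ≤ (d2 t : ℝ) * (D / wc) := by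
    have key : ∀ k t, d2 t = k → φ t s ≤ (k : ℝ) * (D / wc) := by
      intro k
      induction k using Nat.strong_induction_on with
      | _ k ih =>
        intro t hk
        by_cases hts : t = s
        · rw [hts, hφt s]
          positivity
        · obtain ⟨u, hut, hdu⟩ := hd2step t hts
          rw [hk] at hdu
          have hR' : R t u := hut
          have h1 : φ t s ≤ φ u s + φ t u := htri t u s
          have h2 : φ t u ≤ D / wc := hedge t u hR'
          have h3 : φ u s ≤ (d2 u : ℝ) * (D / wc) := ih (d2 u) hdu u rfl
          have hcast : (d2 u : ℝ) + 1 ≤ (k : ℝ) := by exact_mod_cast hdu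
          nlinarith
    exact fun t => key (d2 t) t rfl
  -- the Green-type function
  set G : V → V → ℝ := fun t v => (deg s / D) * (φ t v + φ s t - φ s v) with hGdef
  have hG0 : ∀ t v, 0 ≤ G t v := by
    intro t v
    apply mul_nonneg (div_nonneg (hdegpos s).le hD0.le)
    have := htri s t v
    linarith
  have hGid : ∀ t v, v ≠ t → G t v = (if v = s then (1:ℝ) else 0) + ∑ u, P v u * G t u := by
    intro t v hvt
    have hsum : ∑ u, P v u * G t u
        = (deg s / D) * ((∑ u, P v u * φ t u) + φ s t - ∑ u, P v u * φ s u) := by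
      calc ∑ u, P v u * G t u
          = (deg s / D) * ∑ u, (P v u * φ t u + P v u * φ s t - P v u * φ s u) := by
            rw [Finset.mul_sum]
            refine Finset.sum_congr rfl (fun u _ => ?_)
            simp only [hGdef]
            ring
        _ = (deg s / D) * ((∑ u, P v u * φ t u) + φ s t - ∑ u, P v u * φ s u) := by
            rw [Finset.sum_sub_distrib, Finset.sum_add_distrib, ← Finset.sum_mul, hrow, one_mul]
    have h1 : ∑ u, P v u * φ t u = φ t v - 1 := by
      have := hφeq t v hvt; linarith
    by_cases hvs : v = s
    · subst hvs
      rw [if_pos rfl, hsum, h1, hkac v]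
      simp only [hGdef]
      rw [hφt v]
      have hds := (hdegpos v).ne'
      field_simp
      ring
    · rw [if_neg hvs, hsum, h1]
      have h2 : ∑ u, P v u * φ s u = φ s v - 1 := by
        have := hφeq s v hvs; linarith
      rw [h2]
      simp only [hGdef]
      ring
  have hpot := potential_bound P hP0 s G hG0 hGid
  -- final arithmetic
  have hfinal : ∑ t ∈ ({s} : Finset V)ᶜ, G t s ≤ (Fintype.card V : ℝ) ^ 2 * deg s / wc := by
    have hterm : ∀ t, G t s ≤ (deg s / D) * (((d2 t : ℝ) + (d1 t : ℝ)) * (D / wc)) := by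
      intro t
      apply mul_le_mul_of_nonneg_left _ (div_nonneg (hdegpos s).le hD0.le)
      have h1 := hb1 t
      have h2 := hb2 t
      have h3 := hφnn s s
      have h4 : φ s s = 0 := hφt s
      rw [add_mul]
      linarith
    calc ∑ t ∈ ({s} : Finset V)ᶜ, G t s
        ≤ ∑ t ∈ ({s} : Finset V)ᶜ, (deg s / D) * (((d2 t : ℝ) + (d1 t : ℝ)) * (D / wc)) :=
          Finset.sum_le_sum (fun t _ => hterm t)
      _ ≤ ∑ t, (deg s / D) * (((d2 t : ℝ) + (d1 t : ℝ)) * (D / wc)) := by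
          apply Finset.sum_le_sum_of_subset_of_nonneg (Finset.subset_univ _)
          intro t _ _
          exact mul_nonneg (div_nonneg (hdegpos s).le hD0.le)
            (mul_nonneg (by positivity) hDwc)
      _ = (deg s / D) * (D / wc) * ((∑ t, (d2 t : ℝ)) + ∑ t, (d1 t : ℝ)) := by
          rw [← Finset.sum_add_distrib]
          rw [Finset.mul_sum]
          refine Finset.sum_congr rfl (fun t _ => ?_)
          ring
      _ ≤ (deg s / D) * (D / wc) * ((Fintype.card V : ℝ) * (Fintype.card V : ℝ)) := by
          apply mul_le_mul_of_nonneg_left _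
            (mul_nonneg (div_nonneg (hdegpos s).le hD0.le) hDwc)
          have hc1 : (∑ t, (d1 t : ℝ)) = ((∑ t, d1 t : ℕ) : ℝ) := by push_cast; ring
          have hc2 : (∑ t, (d2 t : ℝ)) = ((∑ t, d2 t : ℕ) : ℝ) := by push_cast; ring
          rw [hc1, hc2]
          have hN : (∑ t, d2 t) + (∑ t, d1 t) ≤ Fintype.card V * Fintype.card V := by
            have hM : Fintype.card V * (Fintype.card V - 1) ≤ Fintype.card V * Fintype.card V :=
              Nat.mul_le_mul_left _ (Nat.sub_le _ _)
            omega
          exact_mod_cast hN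
      _ = (Fintype.card V : ℝ) ^ 2 * deg s / wc := by
          rw [pow_two]
          field_simp [hD0.ne', hwc.ne']
  exact hpot.trans hfinal
end

section
/- Let G be a finite weighted digraph with positive weights and let S ⊆ V. The Schur complement graph G_S (with vertex set S, where the edge from u to v has weight deg(u)·P[u → v], P[u → v] being the probability that a random walk at u next returns to S at v, possibly after leaving S) satisfies: if G is Eulerian then G_S is Eulerian, and every vertex of S has the same degree in G_S as in G. -/
/-- `hitMatrix P S u v` is the probability that the random walk with transition
matrix `P` currently at `u`, after at least one step, first visits the set `S`
at the vertex `v` (possibly after wandering outside `S`). -/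
noncomputable def hitMatrix {V : Type*} [Fintype V] [DecidableEq V]
    (P : Matrix V V ℝ) (S : Finset V) : Matrix V V ℝ :=
  ∑' n : ℕ,
    (Matrix.of fun a b : V => if b ∈ S then 0 else P a b) ^ n *
      (Matrix.of fun a b : V => if b ∈ S then P a b else 0)

/-- The Schur complement of an Eulerian weighted digraph onto `S`, whose edge
from `u` to `v` has weight `deg u * P[u → v]`, is again Eulerian, and every
vertex of `S` keeps the same degree as in `G`. -/
theorem stmt10 {V : Type*} [Fintype V] [DecidableEq V]
    (w : V → V → ℝ) (hw : ∀ a b, 0 ≤ w a b)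
    (hconn : ∀ u v : V, Relation.ReflTransGen (fun a b => 0 < w a b) u v)
    (deg : V → ℝ) (hdeg : ∀ v, deg v = ∑ u, w v u) (hdegpos : ∀ v, 0 < deg v)
    (heul : ∀ v, ∑ u, w u v = deg v)
    (P : Matrix V V ℝ) (hP : ∀ a b, P a b = w a b / deg a)
    (S : Finset V)
    (wS : V → V → ℝ) (hwS : ∀ u v, wS u v = deg u * hitMatrix P S u v) :
    ∀ v ∈ S, (∑ u ∈ S, wS u v = deg v) ∧ (∑ u ∈ S, wS v u = deg v) := by
  classical
  intro v hvS
  haveI : Nonempty V := ⟨v⟩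
  set Q : Matrix V V ℝ := Matrix.of fun a b : V => if b ∈ S then 0 else P a b with hQdef
  set R : Matrix V V ℝ := Matrix.of fun a b : V => if b ∈ S then P a b else 0 with hRdef
  have hPnn : ∀ a b, 0 ≤ P a b := fun a b => by
    rw [hP]; exact div_nonneg (hw a b) (hdegpos a).le
  have hProw : ∀ a, ∑ b, P a b = 1 := fun a => by
    simp only [hP]
    rw [← Finset.sum_div, ← hdeg]
    exact div_self (hdegpos a).ne'
  have hQnn : ∀ a b, 0 ≤ Q a b := fun a b => by
    simp only [hQdef, Matrix.of_apply]
    split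
    · exact le_refl 0
    · exact hPnn a b
  have hRnn : ∀ a b, 0 ≤ R a b := fun a b => by
    simp only [hRdef, Matrix.of_apply]
    split
    · exact hPnn a b
    · exact le_refl 0
  have hQR : ∀ a b, Q a b + R a b = P a b := fun a b => by
    simp only [hQdef, hRdef, Matrix.of_apply]
    split <;> ring
  have hQRsum : ∀ a, (∑ b, Q a b) + (∑ b, R a b) = 1 := fun a => by
    rw [← Finset.sum_add_distrib]
    rw [← hProw a]
    exact Finset.sum_congr rfl fun b _ => hQR a b
  have hQrow : ∀ a, ∑ b, Q a b ≤ 1 := fun a => by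
    have h1 : 0 ≤ ∑ b, R a b := Finset.sum_nonneg fun b _ => hRnn a b
    linarith [hQRsum a]
  -- entries of powers are nonnegative
  have hQpnn : ∀ n (a b : V), 0 ≤ (Q ^ n) a b := by
    intro n
    induction n with
    | zero => intro a b; simp [Matrix.one_apply]; split <;> norm_num
    | succ n ih =>
        intro a b
        rw [pow_succ, Matrix.mul_apply]
        exact Finset.sum_nonneg fun y _ => mul_nonneg (ih a y) (hQnn y b)
  -- row sums of powers
  set g : ℕ → V → ℝ := fun n u => ∑ x, (Q ^ n) u x with hgdef
  have hg0 : ∀ u, g 0 u = 1 := fun u => by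
    simp [hgdef, Matrix.one_apply]
  have hgnn : ∀ n u, 0 ≤ g n u := fun n u =>
    Finset.sum_nonneg fun x _ => hQpnn n u x
  -- generic vector-matrix associativity, entrywise
  have hvm : ∀ (φ : V → ℝ) (M N : Matrix V V ℝ) (z : V),
      ∑ u, φ u * (M * N) u z = ∑ y, (∑ u, φ u * M u y) * N y z := by
    intro φ M N z
    calc ∑ u, φ u * (M * N) u z
        = ∑ u, ∑ y, φ u * M u y * N y z := by
          simp only [Matrix.mul_apply, Finset.mul_sum, mul_assoc]
      _ = ∑ y, ∑ u, φ u * M u y * N y z := Finset.sum_comm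
      _ = ∑ y, (∑ u, φ u * M u y) * N y z := by simp only [Finset.sum_mul]
  -- row-sum recurrences
  have grec : ∀ n u, g (n + 1) u = ∑ x, Q u x * g n x := by
    intro n u
    simp only [hgdef, pow_succ', Matrix.mul_apply, Finset.mul_sum]
    exact Finset.sum_comm
  have grec' : ∀ n u, g (n + 1) u = ∑ y, (Q ^ n) u y * (∑ z, Q y z) := by
    intro n u
    simp only [hgdef, pow_succ, Matrix.mul_apply, Finset.mul_sum]
    exact Finset.sum_comm
  have gle1 : ∀ n u, g n u ≤ 1 := by
    intro n
    induction n with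
    | zero => intro u; rw [hg0]
    | succ n ih =>
        intro u
        rw [grec]
        calc ∑ x, Q u x * g n x ≤ ∑ x, Q u x :=
              Finset.sum_le_sum fun x _ => mul_le_of_le_one_right (hQnn u x) (ih x)
          _ ≤ 1 := hQrow u
  have gstep : ∀ n u, g (n + 1) u ≤ g n u := by
    intro n
    induction n with
    | zero =>
        intro u
        rw [hg0, grec]
        calc ∑ x, Q u x * g 0 x = ∑ x, Q u x := by simp [hg0]
          _ ≤ 1 := hQrow u
    | succ n ih =>
        intro u
        rw [grec (n + 1), grec n]
        exact Finset.sum_le_sum fun x _ => mul_le_mul_of_nonneg_left (ih x) (hQnn u x)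
  have gante : ∀ u, Antitone fun n => g n u := fun u =>
    antitone_nat_of_succ_le fun n => gstep n u
  -- one-step escape lemma
  have hstep : ∀ u x, 0 < w u x → (x ∈ S ∨ ∃ n, g n x < 1) → ∃ n, g n u < 1 := by
    intro u x hwx hcase
    have hPux : 0 < P u x := by rw [hP]; exact div_pos hwx (hdegpos u)
    by_cases hxS : x ∈ S
    · refine ⟨1, ?_⟩
      have hR : 0 < ∑ b, R u b := by
        refine Finset.sum_pos' (fun b _ => hRnn u b) ⟨x, Finset.mem_univ x, ?_⟩
        simpa [hRdef, Matrix.of_apply, hxS] using hPux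
      have h1 : g 1 u = ∑ b, Q u b := by
        rw [grec 0 u]; simp [hg0]
      rw [h1]
      linarith [hQRsum u]
    · obtain ⟨n, hn⟩ := hcase.resolve_left hxS
      refine ⟨n + 1, ?_⟩
      have hQux : 0 < Q u x := by
        simpa [hQdef, Matrix.of_apply, hxS] using hPux
      rw [grec]
      calc ∑ z, Q u z * g n z < ∑ z, Q u z := by
            refine Finset.sum_lt_sum
              (fun z _ => mul_le_of_le_one_right (hQnn u z) (gle1 n z))
              ⟨x, Finset.mem_univ x, ?_⟩
            exact mul_lt_of_lt_one_right hQux hn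
        _ ≤ 1 := hQrow u
  -- from every vertex, the killed walk dies with positive probability
  have hC : ∀ u, u ∈ S ∨ ∃ n, g n u < 1 := by
    intro u
    have h := hconn u v
    induction h using Relation.ReflTransGen.head_induction_on with
    | refl => exact Or.inl hvS
    | head hab _ ih => exact Or.inr (hstep _ _ hab ih)
  have hex : ∀ u, ∃ n, g n u < 1 := by
    intro u
    have hx : ∃ x, 0 < w u x := by
      by_contra h
      push_neg at h
      have : deg u ≤ 0 := by
        rw [hdeg u]
        exact Finset.sum_nonpos fun x _ => h x
      exact absurd (hdegpos u) (not_lt.mpr this)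
    obtain ⟨x, hx⟩ := hx
    exact hstep u x hx (hC x)
  -- uniform horizon
  set F : V → ℕ := fun u => (hex u).choose with hFdef
  set N1 : ℕ := (Finset.univ.sup F) + 1 with hN1def
  have hN1pos : 0 < N1 := Nat.succ_pos _
  have hgN1 : ∀ u, g N1 u < 1 := by
    intro u
    have h1 : F u ≤ N1 := le_trans (Finset.le_sup (Finset.mem_univ u)) (Nat.le_succ _)
    exact lt_of_le_of_lt (gante u h1) (hex u).choose_spec
  set c : ℝ := max (Finset.univ.sup' Finset.univ_nonempty (g N1)) (1/2) with hcdef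
  have hc1 : c < 1 := by
    refine max_lt ?_ (by norm_num)
    rw [Finset.sup'_lt_iff]
    exact fun u _ => hgN1 u
  have hc0 : (0:ℝ) < c := lt_of_lt_of_le (by norm_num) (le_max_right _ _)
  have hgN1c : ∀ u, g N1 u ≤ c :=
    fun u => le_trans (Finset.le_sup' (g N1) (Finset.mem_univ u)) (le_max_left _ _)
  -- submultiplicativity
  have gadd : ∀ a b u, g (a + b) u = ∑ x, (Q ^ a) u x * g b x := by
    intro a b u
    simp only [hgdef, pow_add, Matrix.mul_apply, Finset.mul_sum]
    exact Finset.sum_comm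
  have gsup : ∀ k u, g (k * N1) u ≤ c ^ k := by
    intro k
    induction k with
    | zero => intro u; simpa using (hg0 u).le
    | succ k ih =>
        intro u
        have h1 : (k+1) * N1 = k * N1 + N1 := by ring
        rw [h1, gadd]
        calc ∑ x, (Q ^ (k * N1)) u x * g N1 x
            ≤ ∑ x, (Q ^ (k * N1)) u x * c :=
              Finset.sum_le_sum fun x _ =>
                mul_le_mul_of_nonneg_left (hgN1c x) (hQpnn _ u x)
          _ = g (k * N1) u * c := by rw [← Finset.sum_mul]
          _ ≤ c ^ k * c := mul_le_mul_of_nonneg_right (ih u) hc0.le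
          _ = c ^ (k + 1) := (pow_succ c k).symm
  have gdecay : ∀ n u, g n u ≤ c ^ (n / N1) := by
    intro n u
    exact le_trans (gante u (Nat.div_mul_le_self n N1)) (gsup (n / N1) u)
  -- geometric bound
  set r : ℝ := c ^ ((N1:ℝ)⁻¹) with hrdef
  have hr0 : 0 < r := Real.rpow_pos_of_pos hc0 _
  have hr1 : r < 1 := Real.rpow_lt_one hc0.le hc1 (by positivity)
  have hrpow : r ^ N1 = c := by
    rw [hrdef, ← Real.rpow_natCast (c ^ ((N1:ℝ)⁻¹)) N1, ← Real.rpow_mul hc0.le,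
      inv_mul_cancel₀ (by exact_mod_cast hN1pos.ne'), Real.rpow_one]
  have hgeo : ∀ n, c ^ (n / N1) ≤ c⁻¹ * r ^ n := by
    intro n
    have h1 : r ^ n = c ^ (n / N1) * r ^ (n % N1) := by
      conv_lhs => rw [← Nat.div_add_mod n N1]
      rw [pow_add, pow_mul, hrpow]
    have h2 : r ^ N1 ≤ r ^ (n % N1) :=
      pow_le_pow_of_le_one hr0.le hr1.le (Nat.mod_lt _ hN1pos).le
    have h3 : c ^ (n / N1) * c ≤ r ^ n := by
      rw [h1]
      nth_rewrite 2 [← hrpow]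
      exact mul_le_mul_of_nonneg_left h2 (pow_nonneg hc0.le _)
    rw [inv_mul_eq_div, le_div_iff₀ hc0]
    exact h3
  have gbound : ∀ n u, g n u ≤ c⁻¹ * r ^ n := fun n u =>
    le_trans (gdecay n u) (hgeo n)
  -- the summands of hitMatrix
  set hm : ℕ → Matrix V V ℝ := fun n => Q ^ n * R with hhmdef
  have hmnn : ∀ n a b, 0 ≤ hm n a b := by
    intro n a b
    simp only [hhmdef, Matrix.mul_apply]
    exact Finset.sum_nonneg fun y _ => mul_nonneg (hQpnn n a y) (hRnn y b)
  have hRle1 : ∀ a b, R a b ≤ 1 := by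
    intro a b
    calc R a b ≤ P a b := by
          have := hQnn a b; linarith [hQR a b]
      _ ≤ ∑ z, P a z := Finset.single_le_sum (fun z _ => hPnn a z) (Finset.mem_univ b)
      _ = 1 := hProw a
  have hmle : ∀ n a b, hm n a b ≤ g n a := by
    intro n a b
    simp only [hhmdef, Matrix.mul_apply, hgdef]
    exact Finset.sum_le_sum fun y _ => mul_le_of_le_one_right (hQpnn n a y) (hRle1 y b)
  have hmbound : ∀ n a b, hm n a b ≤ c⁻¹ * r ^ n := fun n a b =>
    le_trans (hmle n a b) (gbound n a)
  have hsum_geo : Summable (fun n : ℕ => c⁻¹ * r ^ n) :=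
    (summable_geometric_of_lt_one hr0.le hr1).mul_left _
  have hsum_entry : ∀ a b, Summable fun n => hm n a b := fun a b =>
    Summable.of_nonneg_of_le (fun n => hmnn n a b) (fun n => hmbound n a b) hsum_geo
  have hsum_row : ∀ a, Summable fun n => hm n a :=
    fun a => Pi.summable.mpr fun b => hsum_entry a b
  have hsum_mat : Summable hm := Pi.summable.mpr hsum_row
  have hH : ∀ a b, hitMatrix P S a b = ∑' n, hm n a b := by
    intro a b
    have h1 : hitMatrix P S = ∑' n, hm n := rfl
    rw [h1]
    change (tsum (α := V → V → ℝ) hm) a b = _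
    rw [tsum_apply hsum_mat, tsum_apply (hsum_row a)]
  -- second component: rows of the Schur complement
  have hts : ∀ n, (∑ u ∈ S, hm n v u) = g n v - g (n + 1) v := by
    intro n
    have h1 : (∑ u ∈ S, hm n v u) = ∑ u, hm n v u := by
      refine Finset.sum_subset (Finset.subset_univ S) ?_
      intro x _ hx
      simp only [hhmdef, Matrix.mul_apply]
      refine Finset.sum_eq_zero fun y _ => ?_
      simp [hRdef, hx]
    have h2 : ∑ u, hm n v u = ∑ y, (Q ^ n) v y * (∑ u, R y u) := by
      simp only [hhmdef, Matrix.mul_apply, Finset.mul_sum]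
      exact Finset.sum_comm
    rw [h1, h2, grec']
    have h3 : ∀ y : V, (Q ^ n) v y * (∑ u, R y u)
        = (Q ^ n) v y - (Q ^ n) v y * ∑ z, Q y z := by
      intro y
      have h4 : (∑ u, R y u) = 1 - ∑ z, Q y z := by linarith [hQRsum y]
      rw [h4, mul_sub, mul_one]
    rw [Finset.sum_congr rfl fun y _ => h3 y, Finset.sum_sub_distrib]
  have htsum : HasSum (fun n => ∑ u ∈ S, hm n v u) 1 := by
    rw [hasSum_iff_tendsto_nat_of_nonneg
      (fun n => Finset.sum_nonneg fun u _ => hmnn n v u) 1]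
    have hps : ∀ m, ∑ n ∈ Finset.range m, (∑ u ∈ S, hm n v u) = 1 - g m v := by
      intro m
      simp only [hts]
      rw [Finset.sum_range_sub' (fun n => g n v) m, hg0]
    simp only [hps]
    have hgv0 : Filter.Tendsto (fun m => g m v) Filter.atTop (nhds 0) := by
      refine squeeze_zero (fun m => hgnn m v) (fun m => gbound m v) ?_
      simpa using (tendsto_pow_atTop_nhds_zero_of_lt_one hr0.le hr1).const_mul c⁻¹
    simpa using tendsto_const_nhds.sub hgv0
  have hsecond : ∑ u ∈ S, wS v u = deg v := by
    have h1 : ∑ u ∈ S, hitMatrix P S v u = 1 := by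
      calc ∑ u ∈ S, hitMatrix P S v u = ∑ u ∈ S, ∑' n, hm n v u :=
            Finset.sum_congr rfl fun u _ => hH v u
        _ = ∑' n, ∑ u ∈ S, hm n v u := (Summable.tsum_finsetSum fun u _ => hsum_entry v u).symm
        _ = 1 := htsum.tsum_eq
    calc ∑ u ∈ S, wS v u = ∑ u ∈ S, deg v * hitMatrix P S v u :=
          Finset.sum_congr rfl fun u _ => hwS v u
      _ = deg v * ∑ u ∈ S, hitMatrix P S v u := by rw [Finset.mul_sum]
      _ = deg v := by rw [h1, mul_one]
  -- first component: columns of the Schur complement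
  set xv : V → ℝ := fun u => if u ∈ S then deg u else 0 with hxvdef
  set yv : V → ℝ := fun u => if u ∈ S then 0 else deg u with hyvdef
  have hxvnn : ∀ u, 0 ≤ xv u := fun u => by
    simp only [hxvdef]; split
    · exact (hdegpos u).le
    · exact le_refl 0
  have hyvnn : ∀ u, 0 ≤ yv u := fun u => by
    simp only [hyvdef]; split
    · exact le_refl 0
    · exact (hdegpos u).le
  have hyvle : ∀ u, yv u ≤ deg u := fun u => by
    simp only [hyvdef]; split
    · exact (hdegpos u).le
    · exact le_refl _
  have hxy : ∀ u, xv u + yv u = deg u := fun u => by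
    simp only [hxvdef, hyvdef]; split <;> ring
  have hdegP : ∀ u z, deg u * P u z = w u z := fun u z => by
    rw [hP, mul_comm, div_mul_cancel₀ _ (hdegpos u).ne']
  have hpiQ : ∀ z, ∑ u, deg u * Q u z = yv z := by
    intro z
    by_cases hz : z ∈ S
    · simp [hQdef, hyvdef, hz]
    · simp only [hQdef, hyvdef, Matrix.of_apply, if_neg hz]
      rw [Finset.sum_congr rfl fun u _ => hdegP u z]
      exact heul z
  have hpiR : ∀ z, ∑ u, deg u * R u z = xv z := by
    intro z
    by_cases hz : z ∈ S
    · simp only [hRdef, hxvdef, Matrix.of_apply, if_pos hz]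
      rw [Finset.sum_congr rfl fun u _ => hdegP u z]
      exact heul z
    · simp [hRdef, hxvdef, hz]
  have hxQ : ∀ y, ∑ u, xv u * Q u y = yv y - ∑ u, yv u * Q u y := by
    intro y
    have h1 : ∑ u, xv u * Q u y + ∑ u, yv u * Q u y = yv y := by
      rw [← Finset.sum_add_distrib, ← hpiQ y]
      exact Finset.sum_congr rfl fun u _ => by rw [← add_mul, hxy]
    linarith
  have hA : ∀ n z, ∑ u, xv u * (Q ^ (n + 1)) u z
      = (∑ u, yv u * (Q ^ n) u z) - (∑ u, yv u * (Q ^ (n + 1)) u z) := by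
    intro n z
    have e1 : ∀ φ : V → ℝ, ∑ u, φ u * (Q ^ (n + 1)) u z
        = ∑ y, (∑ u, φ u * Q u y) * (Q ^ n) y z := by
      intro φ
      rw [pow_succ']
      exact hvm φ Q (Q ^ n) z
    rw [e1 xv,
      Finset.sum_congr rfl fun y (_ : y ∈ Finset.univ) => by rw [hxQ y, sub_mul],
      Finset.sum_sub_distrib, ← e1 yv]
  set b : ℕ → ℝ := fun n => ∑ u, xv u * hm n u v with hbdef
  set β : ℕ → ℝ := fun n => ∑ u, yv u * hm n u v with hβdef
  have hbeta : ∀ m, β m = ∑ y, (∑ u, yv u * (Q ^ m) u y) * R y v := by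
    intro m
    simp only [hβdef, hhmdef]
    exact hvm yv (Q ^ m) R v
  have hbv : ∀ m, b m = ∑ y, (∑ u, xv u * (Q ^ m) u y) * R y v := by
    intro m
    simp only [hbdef, hhmdef]
    exact hvm xv (Q ^ m) R v
  have hb0 : b 0 = deg v - β 0 := by
    have h2 : b 0 + β 0 = deg v := by
      simp only [hbdef, hβdef]
      rw [← Finset.sum_add_distrib]
      have h3 : ∑ u, (xv u * hm 0 u v + yv u * hm 0 u v) = ∑ u, deg u * R u v := by
        refine Finset.sum_congr rfl fun u _ => ?_
        rw [← add_mul, hxy]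
        congr 1
        simp [hhmdef]
      rw [h3, hpiR v]
      simp only [hxvdef]
      rw [if_pos hvS]
    linarith
  have hbsucc : ∀ n, b (n + 1) = β n - β (n + 1) := by
    intro n
    rw [hbv (n + 1), hbeta n, hbeta (n + 1),
      Finset.sum_congr rfl fun y (_ : y ∈ Finset.univ) => by rw [hA n y, sub_mul],
      Finset.sum_sub_distrib]
  have hps2 : ∀ m, ∑ n ∈ Finset.range (m + 1), b n = deg v - β m := by
    intro m
    induction m with
    | zero => simpa using hb0
    | succ m ih =>
        rw [Finset.sum_range_succ, ih, hbsucc m]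
        ring
  have hβ0 : Filter.Tendsto β Filter.atTop (nhds 0) := by
    refine squeeze_zero (g := fun m => (∑ u, deg u) * (c⁻¹ * r ^ m))
      (fun m => Finset.sum_nonneg fun u _ => mul_nonneg (hyvnn u) (hmnn m u v))
      (fun m => ?_) ?_
    · calc β m ≤ ∑ u, deg u * (c⁻¹ * r ^ m) :=
            Finset.sum_le_sum fun u _ =>
              mul_le_mul (hyvle u) (hmbound m u v) (hmnn m u v) (hdegpos u).le
        _ = (∑ u, deg u) * (c⁻¹ * r ^ m) := by rw [← Finset.sum_mul]
    · have := ((tendsto_pow_atTop_nhds_zero_of_lt_one hr0.le hr1).const_mul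
        c⁻¹).const_mul (∑ u, deg u)
      simpa using this
  have hbsum : HasSum b (deg v) := by
    rw [hasSum_iff_tendsto_nat_of_nonneg
      (fun n => Finset.sum_nonneg fun u _ => mul_nonneg (hxvnn u) (hmnn n u v)) (deg v)]
    rw [← Filter.tendsto_add_atTop_iff_nat 1]
    refine (Filter.tendsto_congr (f₂ := fun m => deg v - β m) (fun m => hps2 m)).mpr ?_
    simpa using tendsto_const_nhds.sub hβ0
  have hfirst : ∑ u ∈ S, wS u v = deg v := by
    calc ∑ u ∈ S, wS u v
        = ∑ u ∈ S, deg u * hitMatrix P S u v := Finset.sum_congr rfl fun u _ => hwS u v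
      _ = ∑ u ∈ S, xv u * hitMatrix P S u v := by
          refine Finset.sum_congr rfl fun u hu => ?_
          simp only [hxvdef]
          rw [if_pos hu]
      _ = ∑ u, xv u * hitMatrix P S u v := by
          refine Finset.sum_subset (Finset.subset_univ S) fun x _ hx => ?_
          simp only [hxvdef]
          rw [if_neg hx, zero_mul]
      _ = ∑ u, xv u * ∑' n, hm n u v := Finset.sum_congr rfl fun u _ => by rw [hH]
      _ = ∑ u, ∑' n, xv u * hm n u v := Finset.sum_congr rfl fun u _ => tsum_mul_left.symm
      _ = ∑' n, ∑ u, xv u * hm n u v :=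
          (Summable.tsum_finsetSum fun u _ => (hsum_entry u v).mul_left (xv u)).symm
      _ = deg v := hbsum.tsum_eq
  exact ⟨hfirst, hsecond⟩
end
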